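/- arXiv:2111.04034 — 7 statements merged into one kernel-verified Lean document; each statement's English description precedes it below -/
import Mathlib

section
/- Let p < q be distinct primes, and let p̄, q̄ be the unique positive integers with p·p̄ + q·q̄ = pq + 1. Then Φ_{pq}(X) = (∑_{i=0}^{p̄-1} X^{pi})(∑_{j=0}^{q̄-1} X^{qj}) − X(∑_{i=0}^{q-p̄-1} X^{pi})(∑_{j=0}^{p-q̄-1} X^{qj}). -/
open Polynomial

lemma geom_aux (n k : ℕ) :
    (∑ i ∈ Finset.range n, (X : ℤ[X]) ^ (k * i)) * (X ^ k - 1) = X ^ (k * n) - 1 := by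
  simp_rw [pow_mul]
  exact geom_sum_mul _ _

theorem cyclotomic_binary_formula (p q pbar qbar : ℕ) (hp : p.Prime) (hq : q.Prime)
    (hpq : p < q) (hpbar : 1 ≤ pbar) (hqbar : 1 ≤ qbar)
    (h : p * pbar + q * qbar = p * q + 1) :
    cyclotomic (p * q) ℤ =
      (∑ i ∈ Finset.range pbar, X ^ (p * i)) * (∑ j ∈ Finset.range qbar, X ^ (q * j)) -
        X * (∑ i ∈ Finset.range (q - pbar), X ^ (p * i)) *
          (∑ j ∈ Finset.range (p - qbar), X ^ (q * j)) := by
  have hp1 : 1 < p := hp.one_lt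
  have hq1 : 1 < q := hq.one_lt
  have hpbarq : pbar < q := by nlinarith
  have hqbarp : qbar < p := by nlinarith
  have hspos : 1 ≤ p * pbar := Nat.one_le_iff_ne_zero.2 (Nat.mul_ne_zero (by omega) (by omega))
  have htpos : 1 ≤ q * qbar := Nat.one_le_iff_ne_zero.2 (Nat.mul_ne_zero (by omega) (by omega))
  set s' := p * pbar - 1 with hs'
  set t' := q * qbar - 1 with ht'
  have hs : p * pbar = s' + 1 := by omega
  have ht : q * qbar = t' + 1 := by omega
  have hpqst : p * q = s' + t' + 1 := by omega
  have h3 : p * (q - pbar) = t' := by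
    rw [Nat.mul_sub]; omega
  have h4 : q * (p - qbar) = s' := by
    rw [Nat.mul_sub, mul_comm q p]; omega
  -- nonzero divisor
  have hne : ((X : ℤ[X]) ^ p - 1) * (X ^ q - 1) ≠ 0 := by
    intro hcon
    have := congrArg (eval 0) hcon
    simp [zero_pow (by omega : p ≠ 0), zero_pow (by omega : q ≠ 0)] at this
  apply mul_right_cancel₀ hne
  -- divisors of p*q
  have hdiv : (p * q).divisors = {1, p, q, p * q} := by
    rw [Nat.divisors_mul, hp.divisors, hq.divisors]
    ext d
    simp only [Finset.mem_mul, Finset.mem_insert, Finset.mem_singleton]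
    constructor
    · rintro ⟨a, (rfl | rfl), b, (rfl | rfl), rfl⟩ <;> simp
    · rintro (h' | h' | h' | h')
      · exact ⟨1, Or.inl rfl, 1, Or.inl rfl, by simp [h']⟩
      · exact ⟨p, Or.inr rfl, 1, Or.inl rfl, by simp [h']⟩
      · exact ⟨1, Or.inl rfl, q, Or.inr rfl, by simp [h']⟩
      · exact ⟨p, Or.inr rfl, q, Or.inr rfl, h'.symm⟩
  have hXp : (X : ℤ[X]) ^ p - 1 = cyclotomic 1 ℤ * cyclotomic p ℤ := by
    rw [← prod_cyclotomic_eq_X_pow_sub_one (by omega) ℤ, hp.divisors]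
    rw [Finset.prod_insert (by simp; omega), Finset.prod_singleton]
  have hXq : (X : ℤ[X]) ^ q - 1 = cyclotomic 1 ℤ * cyclotomic q ℤ := by
    rw [← prod_cyclotomic_eq_X_pow_sub_one (by omega) ℤ, hq.divisors]
    rw [Finset.prod_insert (by simp; omega), Finset.prod_singleton]
  have hXpq : (X : ℤ[X]) ^ (p * q) - 1 =
      cyclotomic 1 ℤ * cyclotomic p ℤ * cyclotomic q ℤ * cyclotomic (p * q) ℤ := by
    rw [← prod_cyclotomic_eq_X_pow_sub_one (by positivity) ℤ, hdiv]
    have h1p : (1 : ℕ) ∉ ({p, q, p * q} : Finset ℕ) := by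
      simp; refine ⟨by omega, by omega, ?_⟩; nlinarith
    have h2p : p ∉ ({q, p * q} : Finset ℕ) := by
      simp; refine ⟨by omega, ?_⟩; nlinarith
    have h3p : q ∉ ({p * q} : Finset ℕ) := by
      simp; nlinarith
    rw [Finset.prod_insert h1p, Finset.prod_insert h2p, Finset.prod_insert h3p,
      Finset.prod_singleton]
    ring
  have key : cyclotomic (p * q) ℤ * ((X ^ p - 1) * (X ^ q - 1)) =
      (X ^ (p * q) - 1) * (X - 1) := by
    rw [hXp, hXq, hXpq, ← cyclotomic_one ℤ]; ring
  have rhs : ((∑ i ∈ Finset.range pbar, (X : ℤ[X]) ^ (p * i)) *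
        (∑ j ∈ Finset.range qbar, X ^ (q * j)) -
        X * (∑ i ∈ Finset.range (q - pbar), X ^ (p * i)) *
          (∑ j ∈ Finset.range (p - qbar), X ^ (q * j))) * ((X ^ p - 1) * (X ^ q - 1)) =
      (X ^ (p * q) - 1) * (X - 1) := by
    have e1 := geom_aux pbar p
    have e2 := geom_aux qbar q
    have e3 := geom_aux (q - pbar) p
    have e4 := geom_aux (p - qbar) q
    calc ((∑ i ∈ Finset.range pbar, (X : ℤ[X]) ^ (p * i)) *
        (∑ j ∈ Finset.range qbar, X ^ (q * j)) -
        X * (∑ i ∈ Finset.range (q - pbar), X ^ (p * i)) *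
          (∑ j ∈ Finset.range (p - qbar), X ^ (q * j))) * ((X ^ p - 1) * (X ^ q - 1))
        = ((∑ i ∈ Finset.range pbar, (X : ℤ[X]) ^ (p * i)) * (X ^ p - 1)) *
          ((∑ j ∈ Finset.range qbar, X ^ (q * j)) * (X ^ q - 1)) -
          X * (((∑ i ∈ Finset.range (q - pbar), X ^ (p * i)) * (X ^ p - 1)) *
          ((∑ j ∈ Finset.range (p - qbar), X ^ (q * j)) * (X ^ q - 1))) := by ring
      _ = (X ^ (p * pbar) - 1) * (X ^ (q * qbar) - 1) -
          X * ((X ^ (p * (q - pbar)) - 1) * (X ^ (q * (p - qbar)) - 1)) := by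
          rw [e1, e2, e3, e4]
      _ = (X ^ (p * q) - 1) * (X - 1) := by
          rw [hs, ht, h3, h4, hpqst]; ring
  rw [key, rhs]
end

section
/- For all distinct primes p and q, every coefficient of the binary cyclotomic polynomial Φ_{pq}(X) lies in {-1, 0, 1}. -/
open Polynomial Finset

private lemma coeff_sum_X_pow {α : Type*} (S : Finset α) (e : α → ℕ)
    (he : Set.InjOn e S) (k : ℕ) :
    (∑ x ∈ S, (X : ℤ[X]) ^ (e x)).coeff k = 0 ∨ (∑ x ∈ S, (X : ℤ[X]) ^ (e x)).coeff k = 1 := by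
  rw [finset_sum_coeff]
  simp only [coeff_X_pow]
  rw [Finset.sum_boole]
  have h1 : (S.filter (fun x => k = e x)).card ≤ 1 := by
    rw [Finset.card_le_one]
    intro a ha b hb
    simp only [Finset.mem_filter] at ha hb
    exact he ha.1 hb.1 (ha.2.symm.trans hb.2)
  rcases Nat.le_one_iff_eq_zero_or_eq_one.mp h1 with h | h <;> simp [h]

private lemma exp_inj {p q : ℕ} (hq : 0 < q) (hco : Nat.Coprime p q)
    {i1 j1 i2 j2 : ℕ} (hi1 : i1 < q) (hi2 : i2 < q)
    (h : i1 * p + j1 * q = i2 * p + j2 * q) : i1 = i2 ∧ j1 = j2 := by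
  have h1 : i1 * p ≡ i2 * p [MOD q] := by
    have h0 : i1 * p + j1 * q ≡ i2 * p + j2 * q [MOD q] := h ▸ Nat.ModEq.refl _
    simpa [Nat.ModEq, Nat.add_mul_mod_self_right] using h0
  have h2 : i1 ≡ i2 [MOD q] := Nat.ModEq.cancel_right_of_coprime hco.symm h1
  have h3 : i1 = i2 := by
    have h4 := h2
    unfold Nat.ModEq at h4
    rwa [Nat.mod_eq_of_lt hi1, Nat.mod_eq_of_lt hi2] at h4
  subst h3
  refine ⟨rfl, ?_⟩
  have h5 : j1 * q = j2 * q := by omega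
  exact Nat.eq_of_mul_eq_mul_right hq h5

private lemma exists_rs {p q : ℕ} (hp : p.Prime) (hq : q.Prime) (hco : Nat.Coprime p q) :
    ∃ r s, r < q ∧ s < p ∧ r * p + s * q = (p - 1) * (q - 1) := by
  haveI : NeZero q := ⟨hq.pos.ne'⟩
  set n := (p - 1) * (q - 1) with hn
  have hu : IsUnit ((p : ZMod q)) := (ZMod.isUnit_iff_coprime p q).mpr hco
  set r := ((n : ZMod q) * ↑hu.unit⁻¹).val with hrdef
  have hr : r < q := ZMod.val_lt _
  have hcast : ((r * p : ℕ) : ZMod q) = (n : ZMod q) := by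
    push_cast
    rw [hrdef, ZMod.natCast_val, ZMod.cast_id]
    calc (n : ZMod q) * ↑hu.unit⁻¹ * p = (n : ZMod q) * (↑hu.unit⁻¹ * ↑hu.unit) := by
          rw [IsUnit.unit_spec]; ring
      _ = n := by rw [Units.inv_mul, mul_one]
  have hmod : r * p ≡ n [MOD q] := (ZMod.natCast_eq_natCast_iff _ _ _).mp hcast
  have hp2 := hp.two_le
  have hq2 := hq.two_le
  have hkey : n + p + q = p * q + 1 := by
    obtain ⟨p', rfl⟩ : ∃ p', p = p' + 1 := ⟨p - 1, by omega⟩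
    obtain ⟨q', rfl⟩ : ∃ q', q = q' + 1 := ⟨q - 1, by omega⟩
    simp only [hn, Nat.add_sub_cancel]
    ring
  have hrb : r * p ≤ (q - 1) * p := Nat.mul_le_mul_right p (by omega)
  have hqp : (q - 1) * p + p = q * p := by
    obtain ⟨q', rfl⟩ : ∃ q', q = q' + 1 := ⟨q - 1, by omega⟩
    simp [Nat.add_sub_cancel, add_mul]
  have hle : r * p ≤ n := by
    by_contra hlt
    push_neg at hlt
    have hd : q ∣ r * p - n := (Nat.modEq_iff_dvd' (le_of_lt hlt)).mp hmod.symm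
    have hb : r * p - n < q := by
      have hc : q * p = p * q := Nat.mul_comm q p
      omega
    have := Nat.le_of_dvd (by omega) hd
    omega
  have hd : q ∣ n - r * p := (Nat.modEq_iff_dvd' hle).mp hmod
  refine ⟨r, (n - r * p) / q, hr, ?_, ?_⟩
  · have hsq : (n - r * p) / q * q = n - r * p := Nat.div_mul_cancel hd
    have hnlt : n < p * q := by omega
    have hlt2 : (n - r * p) / q * q < p * q := by omega
    exact Nat.lt_of_mul_lt_mul_right hlt2
  · have hsq : (n - r * p) / q * q = n - r * p := Nat.div_mul_cancel hd
    omega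

theorem cyclotomic_binary_coeff_mem (p q : ℕ) (hp : p.Prime) (hq : q.Prime) (hne : p ≠ q)
    (j : ℕ) : (cyclotomic (p * q) ℤ).coeff j ∈ ({-1, 0, 1} : Set ℤ) := by
  have hco : Nat.Coprime p q := (Nat.coprime_primes hp hq).mpr hne
  obtain ⟨r, s, hr, hs, hrs⟩ := exists_rs hp hq hco
  have hp2 := hp.two_le
  have hq2 := hq.two_le
  have hkey : (p - 1) * (q - 1) + p + q = p * q + 1 := by
    obtain ⟨p', rfl⟩ : ∃ p', p = p' + 1 := ⟨p - 1, by omega⟩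
    obtain ⟨q', rfl⟩ : ∃ q', q = q' + 1 := ⟨q - 1, by omega⟩
    simp only [Nat.add_sub_cancel]
    ring
  have hrp : (r + 1) * p = r * p + p := by ring
  have hsq : (s + 1) * q = s * q + q := by ring
  have hsum : (r + 1) * p + (s + 1) * q = p * q + 1 := by omega
  set A : ℤ[X] := ∑ x ∈ (range (r + 1)) ×ˢ (range (s + 1)), X ^ (x.1 * p + x.2 * q) with hA
  set B : ℤ[X] := ∑ x ∈ (Ico (r + 1) q) ×ˢ (Ico (s + 1) p),
      X ^ (x.1 * p + x.2 * q - p * q) with hB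
  have hApr : A = (∑ i ∈ range (r + 1), ((X : ℤ[X]) ^ p) ^ i) *
      (∑ j' ∈ range (s + 1), ((X : ℤ[X]) ^ q) ^ j') := by
    rw [Finset.sum_mul_sum, hA, Finset.sum_product]
    refine Finset.sum_congr rfl fun i _ => Finset.sum_congr rfl fun j' _ => ?_
    rw [← pow_mul, ← pow_mul, ← pow_add, mul_comm p i, mul_comm q j']
  have hBX : B * X ^ (p * q) = (∑ i ∈ Ico (r + 1) q, ((X : ℤ[X]) ^ p) ^ i) *
      (∑ j' ∈ Ico (s + 1) p, ((X : ℤ[X]) ^ q) ^ j') := by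
    rw [Finset.sum_mul_sum, hB, Finset.sum_product, Finset.sum_mul]
    refine Finset.sum_congr rfl fun i hi => ?_
    rw [Finset.sum_mul]
    refine Finset.sum_congr rfl fun j' hj => ?_
    dsimp only
    rw [← pow_mul, ← pow_mul, ← pow_add, ← pow_add]
    congr 1
    have hi1 := (Finset.mem_Ico.mp hi).1
    have hj1 := (Finset.mem_Ico.mp hj).1
    have h1 : (r + 1) * p ≤ i * p := Nat.mul_le_mul_right p hi1
    have h2 : (s + 1) * q ≤ j' * q := Nat.mul_le_mul_right q hj1
    have h3 : p * i = i * p := Nat.mul_comm p i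
    have h4 : q * j' = j' * q := Nat.mul_comm q j'
    omega
  have geo1 : (∑ i ∈ range (r + 1), ((X : ℤ[X]) ^ p) ^ i) * ((X : ℤ[X]) ^ p - 1) =
      X ^ ((r + 1) * p) - 1 := by
    rw [geom_sum_mul, ← pow_mul, mul_comm p (r + 1)]
  have geo3 : (∑ i ∈ range (s + 1), ((X : ℤ[X]) ^ q) ^ i) * ((X : ℤ[X]) ^ q - 1) =
      X ^ ((s + 1) * q) - 1 := by
    rw [geom_sum_mul, ← pow_mul, mul_comm q (s + 1)]
  have geo2 : (∑ i ∈ Ico (r + 1) q, ((X : ℤ[X]) ^ p) ^ i) * ((X : ℤ[X]) ^ p - 1) =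
      X ^ (p * q) - X ^ ((r + 1) * p) := by
    rw [Finset.sum_Ico_eq_sub _ (show r + 1 ≤ q by omega), sub_mul, geom_sum_mul,
      geom_sum_mul, ← pow_mul, ← pow_mul, mul_comm p (r + 1)]
    ring
  have geo4 : (∑ i ∈ Ico (s + 1) p, ((X : ℤ[X]) ^ q) ^ i) * ((X : ℤ[X]) ^ q - 1) =
      X ^ (p * q) - X ^ ((s + 1) * q) := by
    rw [Finset.sum_Ico_eq_sub _ (show s + 1 ≤ p by omega), sub_mul, geom_sum_mul,
      geom_sum_mul, ← pow_mul, ← pow_mul, mul_comm q (s + 1), mul_comm q p]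
    ring
  have hXp : (X : ℤ[X]) ^ p - 1 = cyclotomic 1 ℤ * cyclotomic p ℤ := by
    rw [← prod_cyclotomic_eq_X_pow_sub_one hp.pos ℤ, hp.divisors,
      Finset.prod_insert (by simpa using hp.one_lt.ne), Finset.prod_singleton]
  have hXq : (X : ℤ[X]) ^ q - 1 = cyclotomic 1 ℤ * cyclotomic q ℤ := by
    rw [← prod_cyclotomic_eq_X_pow_sub_one hq.pos ℤ, hq.divisors,
      Finset.prod_insert (by simpa using hq.one_lt.ne), Finset.prod_singleton]
  have hdiv : (p * q).divisors = {1, p, q, p * q} := by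
    rw [Nat.divisors_mul, hp.divisors, hq.divisors]
    ext d
    simp only [Finset.mem_mul, Finset.mem_insert, Finset.mem_singleton]
    constructor
    · rintro ⟨a, (rfl | rfl), b, (rfl | rfl), rfl⟩ <;> simp
    · rintro (h | h | h | h) <;> subst d
      · exact ⟨1, Or.inl rfl, 1, Or.inl rfl, by ring⟩
      · exact ⟨p, Or.inr rfl, 1, Or.inl rfl, by ring⟩
      · exact ⟨1, Or.inl rfl, q, Or.inr rfl, by ring⟩
      · exact ⟨p, Or.inr rfl, q, Or.inr rfl, by ring⟩
  have hpq1 : (1 : ℕ) ≠ p * q := by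
    intro h; exact hp.ne_one (Nat.eq_one_of_mul_eq_one_right h.symm)
  have hppq : p ≠ p * q := by
    intro h
    nth_rewrite 1 [← Nat.mul_one p] at h
    exact hq.ne_one ((Nat.mul_left_cancel hp.pos h).symm)
  have hqpq : q ≠ p * q := by
    intro h
    nth_rewrite 1 [← Nat.one_mul q] at h
    exact hp.ne_one ((Nat.mul_right_cancel hq.pos h).symm)
  have hprod : (X : ℤ[X]) ^ (p * q) - 1 =
      cyclotomic 1 ℤ * cyclotomic p ℤ * cyclotomic q ℤ * cyclotomic (p * q) ℤ := by
    rw [← prod_cyclotomic_eq_X_pow_sub_one (Nat.mul_pos hp.pos hq.pos) ℤ, hdiv]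
    rw [Finset.prod_insert (by simp [hp.one_lt.ne, hq.one_lt.ne, hpq1]),
      Finset.prod_insert (by simp [hne, hppq]),
      Finset.prod_insert (by simp [hqpq]), Finset.prod_singleton]
    ring
  have hR : cyclotomic (p * q) ℤ * (((X : ℤ[X]) ^ p - 1) * ((X : ℤ[X]) ^ q - 1)) =
      ((X : ℤ[X]) ^ (p * q) - 1) * (X - 1) := by
    rw [hXp, hXq, hprod, cyclotomic_one]
    ring
  have hab : (X : ℤ[X]) ^ ((r + 1) * p) * X ^ ((s + 1) * q) = X ^ (p * q) * X := by
    rw [← pow_add, hsum, pow_succ]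
  have e1 : A * (((X : ℤ[X]) ^ p - 1) * ((X : ℤ[X]) ^ q - 1)) =
      (X ^ ((r + 1) * p) - 1) * (X ^ ((s + 1) * q) - 1) := by
    rw [hApr, mul_mul_mul_comm, geo1, geo3]
  have e2 : (B * X ^ (p * q)) * (((X : ℤ[X]) ^ p - 1) * ((X : ℤ[X]) ^ q - 1)) =
      (X ^ (p * q) - X ^ ((r + 1) * p)) * (X ^ (p * q) - X ^ ((s + 1) * q)) := by
    rw [hBX, mul_mul_mul_comm, geo2, geo4]
  have main : (A - B) * (((X : ℤ[X]) ^ p - 1) * ((X : ℤ[X]) ^ q - 1)) * X ^ (p * q) =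
      cyclotomic (p * q) ℤ * (((X : ℤ[X]) ^ p - 1) * ((X : ℤ[X]) ^ q - 1)) * X ^ (p * q) := by
    linear_combination (X : ℤ[X]) ^ (p * q) * e1 - e2 - (X : ℤ[X]) ^ (p * q) * hR +
      ((X : ℤ[X]) ^ (p * q) - 1) * hab
  have hXpne : (X : ℤ[X]) ^ p - 1 ≠ 0 := by
    intro h
    have h0 := congrArg (eval 0) h
    simp [zero_pow hp.pos.ne'] at h0
  have hXqne : (X : ℤ[X]) ^ q - 1 ≠ 0 := by
    intro h
    have h0 := congrArg (eval 0) h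
    simp [zero_pow hq.pos.ne'] at h0
  have key : A - B = cyclotomic (p * q) ℤ := by
    have h1 := mul_right_cancel₀ (pow_ne_zero (p * q) (X_ne_zero : (X : ℤ[X]) ≠ 0)) main
    exact mul_right_cancel₀ (mul_ne_zero hXpne hXqne) h1
  have inj1 : Set.InjOn (fun x : ℕ × ℕ => x.1 * p + x.2 * q)
      ↑((range (r + 1)) ×ˢ (range (s + 1))) := by
    rintro ⟨i1, j1⟩ h1 ⟨i2, j2⟩ h2 he
    simp only [Finset.mem_coe, Finset.mem_product, Finset.mem_range] at h1 h2
    simp only at he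
    have h3 := exp_inj hq.pos hco (by omega : i1 < q) (by omega : i2 < q) he
    exact Prod.ext h3.1 h3.2
  have inj2 : Set.InjOn (fun x : ℕ × ℕ => x.1 * p + x.2 * q - p * q)
      ↑((Ico (r + 1) q) ×ˢ (Ico (s + 1) p)) := by
    rintro ⟨i1, j1⟩ h1 ⟨i2, j2⟩ h2 he
    simp only [Finset.mem_coe, Finset.mem_product, Finset.mem_Ico] at h1 h2
    simp only at he
    have b1 : (r + 1) * p ≤ i1 * p := Nat.mul_le_mul_right p h1.1.1
    have b2 : (s + 1) * q ≤ j1 * q := Nat.mul_le_mul_right q h1.2.1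
    have b3 : (r + 1) * p ≤ i2 * p := Nat.mul_le_mul_right p h2.1.1
    have b4 : (s + 1) * q ≤ j2 * q := Nat.mul_le_mul_right q h2.2.1
    have he' : i1 * p + j1 * q = i2 * p + j2 * q := by omega
    have h3 := exp_inj hq.pos hco h1.1.2 h2.1.2 he'
    exact Prod.ext h3.1 h3.2
  have hAc : A.coeff j = 0 ∨ A.coeff j = 1 := by
    rw [hA]; exact coeff_sum_X_pow _ _ inj1 j
  have hBc : B.coeff j = 0 ∨ B.coeff j = 1 := by
    rw [hB]; exact coeff_sum_X_pow _ _ inj2 j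
  have final : (cyclotomic (p * q) ℤ).coeff j = A.coeff j - B.coeff j := by
    rw [← key, Polynomial.coeff_sub]
  rcases hAc with h | h <;> rcases hBc with h' | h' <;>
    simp [final, h, h', Set.mem_insert_iff, Set.mem_singleton_iff]
end

section
/- Let p < q be distinct primes and let p̄ ∈ [1, q-1] be the inverse of p modulo q. Then the middle coefficient of Φ_{pq}(X), i.e., the coefficient of X^{φ(pq)/2}, equals (-1)^{p̄ - 1}. -/
open Polynomial Finset


theorem divisors_pq (p q : ℕ) (hp : p.Prime) (hq : q.Prime) (hpq : p ≠ q) :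
    (p*q).divisors = {1, p, q, p*q} := by
  have hp0 := hp.pos; have hq0 := hq.pos
  ext d
  simp only [Nat.mem_divisors, Finset.mem_insert, Finset.mem_singleton]
  constructor
  · rintro ⟨hd, -⟩
    by_cases hpd : p ∣ d
    · obtain ⟨e, rfl⟩ := hpd
      have he : e ∣ q := (mul_dvd_mul_iff_left hp.pos.ne').mp hd
      rcases (Nat.dvd_prime hq).mp he with rfl | rfl
      · right; left; simp
      · right; right; right; rfl
    · have hcop : Nat.Coprime p d := hp.coprime_iff_not_dvd.mpr hpd
      have hdq : d ∣ q := hcop.symm.dvd_of_dvd_mul_left hd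
      rcases (Nat.dvd_prime hq).mp hdq with rfl | rfl
      · left; rfl
      · right; right; left; rfl
  · rintro (rfl|rfl|rfl|rfl) <;> exact ⟨by simp [Dvd.intro, dvd_mul_right, dvd_mul_left], by positivity⟩



theorem H0 (p q : ℕ) (hp : p.Prime) (hq : q.Prime) (hpq : p < q) :
    ((X:ℤ[X])^p - 1) * ((X:ℤ[X])^q - 1) * cyclotomic (p*q) ℤ
      = ((X:ℤ[X]) - 1) * ((X:ℤ[X])^(p*q) - 1) := by
  have hp0 := hp.pos; have hq0 := hq.pos
  have hp2 := hp.two_le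
  have h1 : ((X:ℤ[X])^p - 1) = cyclotomic 1 ℤ * cyclotomic p ℤ := by
    rw [← prod_cyclotomic_eq_X_pow_sub_one hp0, hp.divisors,
      Finset.prod_insert (by simpa using hp.one_lt.ne'.symm), Finset.prod_singleton]
  have h2 : ((X:ℤ[X])^q - 1) = cyclotomic 1 ℤ * cyclotomic q ℤ := by
    rw [← prod_cyclotomic_eq_X_pow_sub_one hq0, hq.divisors,
      Finset.prod_insert (by simpa using hq.one_lt.ne'.symm), Finset.prod_singleton]
  have h3 : ((X:ℤ[X])^(p*q) - 1)
      = cyclotomic 1 ℤ * (cyclotomic p ℤ * (cyclotomic q ℤ * cyclotomic (p*q) ℤ)) := by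
    rw [← prod_cyclotomic_eq_X_pow_sub_one (by positivity), divisors_pq p q hp hq hpq.ne,
        Finset.prod_insert (by
          simp only [Finset.mem_insert, Finset.mem_singleton]
          push_neg
          exact ⟨hp.one_lt.ne'.symm, hq.one_lt.ne'.symm, by nlinarith⟩),
        Finset.prod_insert (by
          simp only [Finset.mem_insert, Finset.mem_singleton]
          push_neg
          exact ⟨hpq.ne, by nlinarith⟩),
        Finset.prod_insert (by simp only [Finset.mem_singleton]; nlinarith),
        Finset.prod_singleton]
  rw [h1, h2, h3, cyclotomic_one]
  ring

theorem H1 (p q : ℕ) (hp : p.Prime) (hq : q.Prime) (hpq : p < q) :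
    cyclotomic (p*q) ℤ * ((X:ℤ[X])^(p*q) - 1)
      = ((X:ℤ[X]) - 1) * (∑ i ∈ range p, (X:ℤ[X])^(q*i)) * (∑ j ∈ range q, (X:ℤ[X])^(p*j)) := by
  have hp0 := hp.pos; have hq0 := hq.pos
  have hgp : (∑ i ∈ range p, (X:ℤ[X])^(q*i)) * ((X:ℤ[X])^q - 1) = (X:ℤ[X])^(p*q) - 1 := by
    have := geom_sum_mul ((X:ℤ[X])^q) p
    simpa [← pow_mul, mul_comm] using this
  have hgq : (∑ j ∈ range q, (X:ℤ[X])^(p*j)) * ((X:ℤ[X])^p - 1) = (X:ℤ[X])^(p*q) - 1 := by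
    have := geom_sum_mul ((X:ℤ[X])^p) q
    simpa [← pow_mul, mul_comm] using this
  have hXp : ((X:ℤ[X])^p - 1) ≠ 0 := by
    intro h
    have h2 : ((X:ℤ[X])^p : ℤ[X]) = 1 := by linear_combination h
    have := congrArg natDegree h2
    simp [natDegree_X_pow] at this
    omega
  have hXq : ((X:ℤ[X])^q - 1) ≠ 0 := by
    intro h
    have h2 : ((X:ℤ[X])^q : ℤ[X]) = 1 := by linear_combination h
    have := congrArg natDegree h2
    simp [natDegree_X_pow] at this
    omega
  apply mul_left_cancel₀ (mul_ne_zero hXp hXq)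
  calc ((X:ℤ[X])^p - 1) * ((X:ℤ[X])^q - 1) * (cyclotomic (p*q) ℤ * ((X:ℤ[X])^(p*q) - 1))
      = (((X:ℤ[X])^p - 1) * ((X:ℤ[X])^q - 1) * cyclotomic (p*q) ℤ) * ((X:ℤ[X])^(p*q) - 1) := by ring
    _ = ((X:ℤ[X]) - 1) * ((X:ℤ[X])^(p*q) - 1) * ((X:ℤ[X])^(p*q) - 1) := by rw [H0 p q hp hq hpq]
    _ = ((X:ℤ[X]) - 1) * (((∑ i ∈ range p, (X:ℤ[X])^(q*i)) * ((X:ℤ[X])^q - 1))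
          * ((∑ j ∈ range q, (X:ℤ[X])^(p*j)) * ((X:ℤ[X])^p - 1))) := by rw [hgp, hgq]; ring
    _ = ((X:ℤ[X])^p - 1) * ((X:ℤ[X])^q - 1) *
        (((X:ℤ[X]) - 1) * (∑ i ∈ range p, (X:ℤ[X])^(q*i)) * (∑ j ∈ range q, (X:ℤ[X])^(p*j))) := by
        ring



theorem coeff_formula (p q m : ℕ) (hp : p.Prime) (hq : q.Prime) (hpq : p < q)
    (hm : m < p*q) :
    (cyclotomic (p*q) ℤ).coeff m
      = (∑ i ∈ range p, ∑ j ∈ range q, if m = q*i+p*j then (1:ℤ) else 0)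
        - (∑ i ∈ range p, ∑ j ∈ range q, if m = q*i+p*j+1 then (1:ℤ) else 0) := by
  have hR : ((X:ℤ[X]) - 1) * (∑ i ∈ range p, (X:ℤ[X])^(q*i)) * (∑ j ∈ range q, (X:ℤ[X])^(p*j))
      = ∑ i ∈ range p, ∑ j ∈ range q, ((X:ℤ[X])^(q*i+p*j+1) - (X:ℤ[X])^(q*i+p*j)) := by
    rw [mul_assoc, Finset.sum_mul_sum, Finset.mul_sum]
    refine Finset.sum_congr rfl fun i _ => ?_
    rw [Finset.mul_sum]
    refine Finset.sum_congr rfl fun j _ => ?_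
    simp only [pow_add, pow_one]
    ring
  have h := congrArg (fun f => coeff f m) (H1 p q hp hq hpq)
  simp only [hR] at h
  rw [mul_sub, mul_one, coeff_sub, coeff_mul_X_pow', if_neg (by omega)] at h
  rw [finset_sum_coeff] at h
  simp only [finset_sum_coeff, coeff_sub, coeff_X_pow] at h
  rw [zero_sub] at h
  have h2 : -(cyclotomic (p*q) ℤ).coeff m
      = (∑ i ∈ range p, ∑ j ∈ range q, if m = q*i+p*j+1 then (1:ℤ) else 0)
        - (∑ i ∈ range p, ∑ j ∈ range q, if m = q*i+p*j then (1:ℤ) else 0) := by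
    rw [h, ← Finset.sum_sub_distrib]
    refine Finset.sum_congr rfl fun i _ => ?_
    rw [← Finset.sum_sub_distrib]
  linarith



theorem sum_oneA' (p q m i0 j0 : ℕ) (hi0 : i0 < p) (hj0 : j0 < q)
    (hw : m = q*i0 + p*j0)
    (huniq : ∀ i < p, ∀ j < q, m = q*i + p*j → i = i0 ∧ j = j0) :
    ∑ i ∈ range p, ∑ j ∈ range q, (if m = q*i+p*j then (1:ℤ) else 0) = 1 := by
  rw [Finset.sum_eq_single_of_mem i0 (mem_range.mpr hi0)]
  · rw [Finset.sum_eq_single_of_mem j0 (mem_range.mpr hj0), if_pos hw]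
    intro j hj hne
    rw [if_neg]
    intro h; exact hne (huniq i0 hi0 j (mem_range.mp hj) h).2
  · intro i hi hne
    apply Finset.sum_eq_zero
    intro j hj
    rw [if_neg]
    intro h; exact hne (huniq i (mem_range.mp hi) j (mem_range.mp hj) h).1

theorem sum_zeroA' (p q m : ℕ) (hempty : ∀ i < p, ∀ j < q, m ≠ q*i + p*j) :
    ∑ i ∈ range p, ∑ j ∈ range q, (if m = q*i+p*j then (1:ℤ) else 0) = 0 := by
  apply Finset.sum_eq_zero; intro i hi
  apply Finset.sum_eq_zero; intro j hj
  exact if_neg (hempty i (mem_range.mp hi) j (mem_range.mp hj))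

theorem cval1 (q v c : ℤ) (hq3 : 3 ≤ q) (hqodd : q % 2 = 1) (h : v = q*c)
    (hlo : -q < v) (hhi : v < 2*q) (hv2 : v % 2 = 0) : v = 0 := by
  have hc : c = 0 := by
    rcases lt_trichotomy c 0 with h1|h1|h1
    · exfalso; have h2 : c ≤ -1 := by omega
      nlinarith
    · exact h1
    · exfalso
      have h2 : c = 1 ∨ 2 ≤ c := by omega
      rcases h2 with rfl|h2
      · simp at h; omega
      · nlinarith
  rw [hc, mul_zero] at h; exact h

theorem cval2 (q v c : ℤ) (hq3 : 3 ≤ q) (hqodd : q % 2 = 1) (h : v = q*c)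
    (hlo : 0 < v) (hhi : v < 3*q) (hv2 : v % 2 = 0) : v = 2*q := by
  have hc : c = 2 := by
    rcases lt_trichotomy c 1 with h1|h1|h1
    · exfalso; have h2 : c ≤ 0 := by omega
      nlinarith
    · exfalso; rw [h1] at h; simp at h; omega
    · have h2 : c = 2 ∨ 3 ≤ c := by omega
      rcases h2 with rfl|h2
      · rfl
      · exfalso; nlinarith
  rw [hc] at h; omega

theorem cval3 (q v c : ℤ) (hq3 : 3 ≤ q) (hqodd : q % 2 = 1) (h : v = q*c)
    (hlo : -q < v) (hhi : v < 2*q) (hv2 : v % 2 = 1) : v = q := by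
  have hc : c = 1 := by
    rcases lt_trichotomy c 0 with h1|h1|h1
    · exfalso; have h2 : c ≤ -1 := by omega
      nlinarith
    · exfalso; rw [h1] at h; simp at h; omega
    · have h2 : c = 1 ∨ 2 ≤ c := by omega
      rcases h2 with rfl|h2
      · rfl
      · exfalso; nlinarith
  rw [hc] at h; omega

theorem cval4 (q v c : ℤ) (hq3 : 3 ≤ q) (hqodd : q % 2 = 1) (h : v = q*c)
    (hlo : 0 < v) (hhi : v < 3*q) (hv2 : v % 2 = 1) : v = q := by
  have hc : c = 1 := by
    rcases lt_trichotomy c 1 with h1|h1|h1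
    · exfalso; have h2 : c ≤ 0 := by omega
      nlinarith
    · exact h1
    · exfalso
      have h2 : c = 2 ∨ 3 ≤ c := by omega
      rcases h2 with rfl|h2
      · rw [h] at hv2; omega
      · nlinarith
  rw [hc] at h; omega

theorem sum_oneB' (p q m i0 j0 : ℕ) (hi0 : i0 < p) (hj0 : j0 < q)
    (hw : m = q*i0 + p*j0 + 1)
    (huniq : ∀ i < p, ∀ j < q, m = q*i + p*j + 1 → i = i0 ∧ j = j0) :
    ∑ i ∈ range p, ∑ j ∈ range q, (if m = q*i+p*j+1 then (1:ℤ) else 0) = 1 := by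
  rw [Finset.sum_eq_single_of_mem i0 (mem_range.mpr hi0)]
  · rw [Finset.sum_eq_single_of_mem j0 (mem_range.mpr hj0), if_pos hw]
    intro j hj hne
    rw [if_neg]
    intro h; exact hne (huniq i0 hi0 j (mem_range.mp hj) h).2
  · intro i hi hne
    apply Finset.sum_eq_zero
    intro j hj
    rw [if_neg]
    intro h; exact hne (huniq i (mem_range.mp hi) j (mem_range.mp hj) h).1

theorem sum_zeroB' (p q m : ℕ) (hempty : ∀ i < p, ∀ j < q, m ≠ q*i + p*j + 1) :
    ∑ i ∈ range p, ∑ j ∈ range q, (if m = q*i+p*j+1 then (1:ℤ) else 0) = 0 := by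
  apply Finset.sum_eq_zero; intro i hi
  apply Finset.sum_eq_zero; intro j hj
  exact if_neg (hempty i (mem_range.mp hi) j (mem_range.mp hj))


section NT
variable (p q pbar k m i0 j0 : ℕ)

-- pbar odd : unique solution of m = q*i + p*j
theorem uniqA (i j : ℕ)
    (hp2 : 2 ≤ p) (hq3 : 3 ≤ q) (hqodd : q % 2 = 1)
    (hpb : pbar % 2 = 1) (hpbq : pbar + 1 ≤ q)
    (hk : p * pbar = 1 + k * q) (hkp : k + 1 ≤ p)
    (hm2 : 2*m + p + q = p*q + 1)
    (hj0 : 2*j0 + 1 = pbar) (hi0 : 2*i0 + k + 1 = p)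
    (hi : i < p) (hj : j < q) (heq : m = q*i + p*j) : i = i0 ∧ j = j0 := by
  have hkz : (p:ℤ) * pbar = 1 + k * q := by exact_mod_cast hk
  have hmz : 2*(m:ℤ) + p + q = p*q + 1 := by exact_mod_cast hm2
  have heqz : (m:ℤ) = q*i + p*j := by exact_mod_cast heq
  have hi0z : 2*(i0:ℤ) + k + 1 = p := by exact_mod_cast hi0
  have hj0z : 2*(j0:ℤ) + 1 = pbar := by exact_mod_cast hj0
  have hc : 2*(j:ℤ) + 1 - pbar
      = q * ((pbar:ℤ)*p - k - pbar - 2*i*pbar - 2*j*k) := by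
    linear_combination (pbar:ℤ)*hmz - 2*(pbar:ℤ)*heqz - (1+2*(j:ℤ))*hkz
  have hv : 2*(j:ℤ) + 1 - pbar = 0 := by
    apply cval1 q _ _ (by exact_mod_cast hq3) (by omega) hc (by omega) (by omega) (by omega)
  have hjj : j = j0 := by omega
  have hjz : (j:ℤ) = j0 := by exact_mod_cast hjj
  have hqi : (q:ℤ) * (2*i) = q * (2*i0) := by
    linear_combination (-2:ℤ)*heqz + hmz - hkz - (q:ℤ)*hi0z - (p:ℤ)*hj0z + (-2*(p:ℤ))*hjz
  have : (2:ℤ)*i = 2*i0 := mul_left_cancel₀ (by positivity) hqi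
  exact ⟨by omega, hjj⟩

-- pbar odd : no solution of m = q*i + p*j + 1
theorem emptyB (i j : ℕ)
    (hp2 : 2 ≤ p) (hq3 : 3 ≤ q) (hqodd : q % 2 = 1)
    (hpb : pbar % 2 = 1) (hpb1 : 1 ≤ pbar) (hpbq : pbar + 1 ≤ q)
    (hk : p * pbar = 1 + k * q) (hk1 : 1 ≤ k) (hkp : k + 1 ≤ p)
    (hm2 : 2*m + p + q = p*q + 1)
    (hi : i < p) (hj : j < q) (heq : m = q*i + p*j + 1) : False := by
  have hkz : (p:ℤ) * pbar = 1 + k * q := by exact_mod_cast hk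
  have hmz : 2*(m:ℤ) + p + q = p*q + 1 := by exact_mod_cast hm2
  have heqz : (m:ℤ) = q*i + p*j + 1 := by exact_mod_cast heq
  have hc : 2*(j:ℤ) + 1 + pbar
      = q * ((pbar:ℤ)*p - k - pbar - 2*i*pbar - 2*j*k) := by
    linear_combination (pbar:ℤ)*hmz - 2*(pbar:ℤ)*heqz - (1+2*(j:ℤ))*hkz
  have hv : 2*(j:ℤ) + 1 + pbar = 2*q := by
    apply cval2 q _ _ (by exact_mod_cast hq3) (by omega) hc (by omega) (by omega) (by omega)
  have hjv : 2*(j:ℤ) = 2*(q:ℤ) - 1 - pbar := by omega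
  have hqi : (q:ℤ) * (2*i) = q * ((k:ℤ) - p - 1) := by
    linear_combination hmz + hkz + (-2:ℤ)*heqz + (-(p:ℤ))*hjv
  have h1 : (0:ℤ) ≤ (q:ℤ) * (2*i) := by positivity
  have h2 : (q:ℤ) * ((k:ℤ) - p - 1) < 0 := by
    apply mul_neg_of_pos_of_neg (by exact_mod_cast Nat.lt_of_lt_of_le (by norm_num) hq3)
    have : (k:ℤ) + 1 ≤ p := by exact_mod_cast hkp
    omega
  omega
end NT



section NT
variable (p q pbar k m i0 j0 : ℕ)

-- pbar even : no solution of m = q*i + p*j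
theorem emptyA (i j : ℕ)
    (hp2 : 2 ≤ p) (hq3 : 3 ≤ q) (hqodd : q % 2 = 1)
    (hpb : pbar % 2 = 0) (hpb1 : 1 ≤ pbar) (hpbq : pbar + 1 ≤ q)
    (hk : p * pbar = 1 + k * q) (hk1 : 1 ≤ k) (hkp : k + 1 ≤ p)
    (hm2 : 2*m + p + q = p*q + 1)
    (hi : i < p) (hj : j < q) (heq : m = q*i + p*j) : False := by
  have hkz : (p:ℤ) * pbar = 1 + k * q := by exact_mod_cast hk
  have hmz : 2*(m:ℤ) + p + q = p*q + 1 := by exact_mod_cast hm2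
  have heqz : (m:ℤ) = q*i + p*j := by exact_mod_cast heq
  have hc : 2*(j:ℤ) + 1 - pbar
      = q * ((pbar:ℤ)*p - k - pbar - 2*i*pbar - 2*j*k) := by
    linear_combination (pbar:ℤ)*hmz - 2*(pbar:ℤ)*heqz - (1+2*(j:ℤ))*hkz
  have hv : 2*(j:ℤ) + 1 - pbar = q := by
    apply cval3 q _ _ (by exact_mod_cast hq3) (by omega) hc (by omega) (by omega) (by omega)
  have hjv : 2*(j:ℤ) = (q:ℤ) - 1 + pbar := by omega
  have hqi : (q:ℤ) * (2*i) = q * (-1 - (k:ℤ)) := by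
    linear_combination hmz - hkz - 2*heqz - (p:ℤ)*hjv
  have h1 : (0:ℤ) ≤ (q:ℤ) * (2*i) := by positivity
  have h2 : (q:ℤ) * (-1 - (k:ℤ)) < 0 := by
    apply mul_neg_of_pos_of_neg (by exact_mod_cast Nat.lt_of_lt_of_le (by norm_num) hq3)
    omega
  omega

-- pbar even : unique solution of m = q*i + p*j + 1
theorem uniqB (i j : ℕ)
    (hp2 : 2 ≤ p) (hq3 : 3 ≤ q) (hqodd : q % 2 = 1)
    (hpb : pbar % 2 = 0) (hpb1 : 1 ≤ pbar) (hpbq : pbar + 1 ≤ q)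
    (hk : p * pbar = 1 + k * q) (hkp : k + 1 ≤ p)
    (hm2 : 2*m + p + q = p*q + 1)
    (hj0 : 2*j0 + pbar + 1 = q) (hi0 : 2*i0 + 1 = k)
    (hi : i < p) (hj : j < q) (heq : m = q*i + p*j + 1) : i = i0 ∧ j = j0 := by
  have hkz : (p:ℤ) * pbar = 1 + k * q := by exact_mod_cast hk
  have hmz : 2*(m:ℤ) + p + q = p*q + 1 := by exact_mod_cast hm2
  have heqz : (m:ℤ) = q*i + p*j + 1 := by exact_mod_cast heq
  have hi0z : 2*(i0:ℤ) + 1 = k := by exact_mod_cast hi0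
  have hc : 2*(j:ℤ) + 1 + pbar
      = q * ((pbar:ℤ)*p - k - pbar - 2*i*pbar - 2*j*k) := by
    linear_combination (pbar:ℤ)*hmz - 2*(pbar:ℤ)*heqz - (1+2*(j:ℤ))*hkz
  have hv : 2*(j:ℤ) + 1 + pbar = q := by
    apply cval4 q _ _ (by exact_mod_cast hq3) (by omega) hc (by omega) (by omega) (by omega)
  have hjj : j = j0 := by omega
  have hjv : 2*(j:ℤ) = (q:ℤ) - 1 - pbar := by omega
  have hqi : (q:ℤ) * (2*i) = q * (2*i0) := by
    linear_combination hmz + hkz - 2*heqz - (p:ℤ)*hjv - (q:ℤ)*hi0z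
  have : (2:ℤ)*i = 2*i0 := mul_left_cancel₀ (by positivity) hqi
  exact ⟨by omega, hjj⟩

-- witnesses
theorem witA (hp2 : 2 ≤ p) (hq3 : 3 ≤ q)
    (hk : p * pbar = 1 + k * q)
    (hm2 : 2*m + p + q = p*q + 1)
    (hj0 : 2*j0 + 1 = pbar) (hi0 : 2*i0 + k + 1 = p) :
    m = q*i0 + p*j0 := by
  have hkz : (p:ℤ) * pbar = 1 + k * q := by exact_mod_cast hk
  have hmz : 2*(m:ℤ) + p + q = p*q + 1 := by exact_mod_cast hm2
  have hi0z : 2*(i0:ℤ) + k + 1 = p := by exact_mod_cast hi0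
  have hj0z : 2*(j0:ℤ) + 1 = pbar := by exact_mod_cast hj0
  have h2 : (2:ℤ)*m = 2*((q:ℤ)*i0 + (p:ℤ)*j0) := by
    linear_combination hmz - hkz - (q:ℤ)*hi0z - (p:ℤ)*hj0z
  have h3 : (m:ℤ) = (q:ℤ)*i0 + (p:ℤ)*j0 := mul_left_cancel₀ (two_ne_zero) h2
  exact_mod_cast h3

theorem witB (hp2 : 2 ≤ p) (hq3 : 3 ≤ q)
    (hk : p * pbar = 1 + k * q)
    (hm2 : 2*m + p + q = p*q + 1)
    (hj0 : 2*j0 + pbar + 1 = q) (hi0 : 2*i0 + 1 = k) :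
    m = q*i0 + p*j0 + 1 := by
  have hkz : (p:ℤ) * pbar = 1 + k * q := by exact_mod_cast hk
  have hmz : 2*(m:ℤ) + p + q = p*q + 1 := by exact_mod_cast hm2
  have hi0z : 2*(i0:ℤ) + 1 = k := by exact_mod_cast hi0
  have hj0z : 2*(j0:ℤ) + pbar + 1 = q := by exact_mod_cast hj0
  have h2 : (2:ℤ)*m = 2*((q:ℤ)*i0 + (p:ℤ)*j0 + 1) := by
    linear_combination hmz + hkz - (q:ℤ)*hi0z - (p:ℤ)*hj0z
  have h3 : (m:ℤ) = (q:ℤ)*i0 + (p:ℤ)*j0 + 1 := mul_left_cancel₀ (two_ne_zero) h2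
  exact_mod_cast h3
end NT



theorem cyclotomic_binary_middle_coeff (p q pbar : ℕ) (hp : p.Prime) (hq : q.Prime)
    (hpq : p < q) (hpbar : 1 ≤ pbar) (hpbar' : pbar ≤ q - 1)
    (hinv : p * pbar ≡ 1 [MOD q]) :
    (cyclotomic (p * q) ℤ).coeff ((p * q).totient / 2) = (-1) ^ (pbar - 1) := by
  have hp2 : 2 ≤ p := hp.two_le
  have hq3 : 3 ≤ q := by have := hq.two_le; omega
  have hqodd : q % 2 = 1 := Nat.odd_iff.mp (hq.odd_of_ne_two (by omega))
  have hpbq : pbar + 1 ≤ q := by omega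
  have hmod : p * pbar % q = 1 := by
    have h1 := hinv
    unfold Nat.ModEq at h1
    rwa [Nat.mod_eq_of_lt hq.one_lt] at h1
  obtain ⟨k, hk⟩ : ∃ k, p * pbar = 1 + k * q := by
    refine ⟨p * pbar / q, ?_⟩
    have h1 := Nat.div_add_mod (p*pbar) q
    rw [hmod, mul_comm (p * pbar / q) q] at *
    omega
  have hppb2 : 2 ≤ p * pbar := le_trans hp2 (Nat.le_mul_of_pos_right p (by omega))
  have hk1 : 1 ≤ k := by
    rcases Nat.eq_zero_or_pos k with rfl|h
    · simp at hk; omega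
    · exact h
  have hkp : k + 1 ≤ p := by
    by_contra h
    push_neg at h
    have h1 : p ≤ k := by omega
    have h2 : p * pbar ≤ p * (q-1) := Nat.mul_le_mul_left p hpbar'
    have h3 : p * (q-1) + p = p*q := by
      zify [hq.one_le]; ring
    have h4 : q * p ≤ q * k := Nat.mul_le_mul_left q h1
    have h5 : q * p = p * q := mul_comm q p
    have h6 : k * q = q * k := mul_comm k q
    omega
  have htot : (p*q).totient = (p-1)*(q-1) := by
    rw [Nat.totient_mul ((Nat.coprime_primes hp hq).mpr hpq.ne),
      Nat.totient_prime hp, Nat.totient_prime hq]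
  have hx : (p-1)*(q-1) + p + q = p*q + 1 := by
    zify [hp.one_le, hq.one_le]
    ring
  have hdvd : 2 ∣ (p-1)*(q-1) := Dvd.dvd.mul_left (by omega) _
  obtain ⟨m, hmdef⟩ : ∃ m, (p*q).totient/2 = m := ⟨_, rfl⟩
  rw [hmdef]
  rw [htot] at hmdef
  have hm2 : 2*m + p + q = p*q + 1 := by omega
  have hple : 2 ≤ (p-1)*(q-1) := by
    calc 2 = 1 * 2 := by norm_num
    _ ≤ (p-1)*(q-1) := Nat.mul_le_mul (by omega) (by omega)
  have hmlt : m < p*q := by omega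
  -- parity of k
  have hparity : p * pbar % 2 = (1 + k) % 2 := by
    have h := Nat.mul_mod k q 2
    rw [hqodd, mul_one] at h
    omega
  rw [coeff_formula p q m hp hq hpq hmlt]
  rcases Nat.even_or_odd pbar with hev|hodd
  · -- pbar even
    have hpb : pbar % 2 = 0 := Nat.even_iff.mp hev
    have hkodd : k % 2 = 1 := by
      have h1 : p * pbar % 2 = 0 := by
        rw [Nat.mul_mod, hpb]; simp
      omega
    obtain ⟨i0, hi0⟩ : ∃ i0, 2*i0 + 1 = k := ⟨(k-1)/2, by omega⟩
    obtain ⟨j0, hj0⟩ : ∃ j0, 2*j0 + pbar + 1 = q := ⟨(q-pbar-1)/2, by omega⟩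
    have hi0p : i0 < p := by omega
    have hj0q : j0 < q := by omega
    rw [sum_zeroA' p q m (fun i hi j hj heq => emptyA p q pbar k m i j hp2 hq3 hqodd
        hpb hpbar hpbq hk hk1 hkp hm2 hi hj heq),
      sum_oneB' p q m i0 j0 hi0p hj0q (witB p q pbar k m i0 j0 hp2 hq3 hk hm2 hj0 hi0)
        (fun i hi j hj heq => uniqB p q pbar k m i0 j0 i j hp2 hq3 hqodd hpb hpbar hpbq
          hk hkp hm2 hj0 hi0 hi hj heq)]
    have hpow : (-1:ℤ)^(pbar-1) = -1 := Odd.neg_one_pow (by rw [Nat.odd_iff]; omega)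
    rw [hpow]; ring
  · -- pbar odd
    have hpb : pbar % 2 = 1 := Nat.odd_iff.mp hodd
    have hkpar : (1 + k) % 2 = p % 2 := by
      have h1 : p * pbar % 2 = p % 2 := by
        rw [Nat.mul_mod, hpb]; simp [Nat.mod_mod_of_dvd]
      omega
    obtain ⟨i0, hi0⟩ : ∃ i0, 2*i0 + k + 1 = p := ⟨(p-1-k)/2, by omega⟩
    obtain ⟨j0, hj0⟩ : ∃ j0, 2*j0 + 1 = pbar := ⟨(pbar-1)/2, by omega⟩
    have hi0p : i0 < p := by omega
    have hj0q : j0 < q := by omega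
    rw [sum_oneA' p q m i0 j0 hi0p hj0q (witA p q pbar k m i0 j0 hp2 hq3 hk hm2 hj0 hi0)
        (fun i hi j hj heq => uniqA p q pbar k m i0 j0 i j hp2 hq3 hqodd hpb hpbq hk hkp
          hm2 hj0 hi0 hi hj heq),
      sum_zeroB' p q m (fun i hi j hj heq => emptyB p q pbar k m i j hp2 hq3 hqodd
        hpb hpbar hpbq hk hk1 hkp hm2 hi hj heq)]
    have hpow : (-1:ℤ)^(pbar-1) = 1 := Even.neg_one_pow (by rw [Nat.even_iff]; omega)
    rw [hpow]; ring
end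

section
/- For distinct primes p < q, writing n = pq with p̄, q̄ the inverses of p mod q and q mod p in [1,q-1] and [1,p-1], the number θ_n = 2·p̄·q̄ − 1 of nonzero coefficients of Φ_{pq} satisfies θ_n > √(pq). -/
open Polynomial

theorem cyclotomic_binary_nonzero_coeffs_gt_sqrt (p q pbar qbar : ℕ) (hp : p.Prime)
    (hq : q.Prime) (hpq : p < q) (hpbar : 1 ≤ pbar) (hpbar' : pbar ≤ q - 1)
    (hqbar : 1 ≤ qbar) (hqbar' : qbar ≤ p - 1)
    (h : p * pbar + q * qbar = p * q + 1)
    (htheta : (cyclotomic (p * q) ℤ).support.card = 2 * pbar * qbar - 1) :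
    ((2 * pbar * qbar - 1 : ℕ) : ℝ) > Real.sqrt (p * q) := by
  have hp2 : 2 ≤ p := hp.two_le
  have hqbp : qbar ≤ p - 1 := hqbar'
  -- work in ℤ
  have hZ : (q : ℤ) ≤ 2 * pbar * qbar - 1 := by
    have h' : (p : ℤ) * pbar + q * qbar = p * q + 1 := by exact_mod_cast h
    have hb1 : (1 : ℤ) ≤ qbar := by exact_mod_cast hqbar
    have hb2 : (qbar : ℤ) ≤ p - 1 := by
      have : (qbar : ℤ) ≤ (p - 1 : ℕ) := by exact_mod_cast hqbar'
      omega
    have ha1 : (1 : ℤ) ≤ pbar := by exact_mod_cast hpbar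
    have hp2' : (2 : ℤ) ≤ p := by exact_mod_cast hp2
    have hpq' : (p : ℤ) < q := by exact_mod_cast hpq
    nlinarith [mul_nonneg (by linarith : (0:ℤ) ≤ (qbar : ℤ) - 1)
        (by linarith : (0:ℤ) ≤ (p : ℤ) - 1 - qbar),
      mul_nonneg (by linarith : (0:ℤ) ≤ (p : ℤ) - 2)
        (by linarith : (0:ℤ) ≤ (q : ℤ) - 1),
      mul_pos (by linarith : (0:ℤ) < (p:ℤ)) (by linarith : (0:ℤ) < (q:ℤ))]
  have hN : q ≤ 2 * pbar * qbar - 1 := by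
    have h1 : 1 ≤ 2 * pbar * qbar := by nlinarith
    zify [h1]
    exact_mod_cast hZ
  have hsq : Real.sqrt (p * q) < (q : ℝ) := by
    rw [Real.sqrt_lt' (by exact_mod_cast hq.pos)]
    have : (p : ℝ) < q := by exact_mod_cast hpq
    nlinarith [hq.pos, (by exact_mod_cast hq.pos : (0:ℝ) < (q:ℝ))]
  calc Real.sqrt (p * q) < (q : ℝ) := hsq
    _ ≤ ((2 * pbar * qbar - 1 : ℕ) : ℝ) := by exact_mod_cast hN
end

section
/- For all primes p < q, the maximum gap of the binary cyclotomic polynomial Φ_{pq}(X) equals p − 1; that is, the maximum difference between consecutive exponents appearing with nonzero coefficient in Φ_{pq}(X) is p − 1. -/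
open Polynomial

/-- The maximum gap of a polynomial: the largest difference between consecutive
exponents appearing with nonzero coefficient. -/
noncomputable def maxGap (P : Polynomial ℤ) : ℕ :=
  ((P.support ×ˢ P.support).filter
      (fun ij => ij.1 < ij.2 ∧ ∀ k ∈ P.support, ¬(ij.1 < k ∧ k < ij.2))).sup
    (fun ij => ij.2 - ij.1)

namespace BinaryCycloAux

open Finset

/-- `kk p q n` is the unique `k < p` with `k*q ≡ n (mod p)`. -/
noncomputable def kk (p q n : ℕ) : ℕ := (((n : ZMod p)) * (q : ZMod p)⁻¹).val

noncomputable def Bf (p q n : ℕ) : ℤ := if kk p q n * q ≤ n then 1 else 0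

noncomputable def gf (p q m : ℕ) : ℤ := if m % q = 0 ∧ m / q < p then 1 else 0

noncomputable def Df (p q n : ℕ) : ℤ :=
  Bf p q n - (if n = 0 then 0 else Bf p q (n-1))

variable {p q : ℕ}

lemma kk_lt (hp : p.Prime) (n : ℕ) : kk p q n < p := by
  haveI : NeZero p := ⟨hp.pos.ne'⟩
  exact ZMod.val_lt _

lemma q_ne_zero (hp : p.Prime) (hq : q.Prime) (hpq : p < q) : (q : ZMod p) ≠ 0 := by
  haveI := Fact.mk hp
  rw [Ne, ZMod.natCast_eq_zero_iff]
  intro h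
  exact absurd ((Nat.prime_dvd_prime_iff_eq hp hq).mp h) hpq.ne

lemma kk_mod (hp : p.Prime) (hq : q.Prime) (hpq : p < q) (n : ℕ) :
    (kk p q n * q) % p = n % p := by
  haveI := Fact.mk hp
  have hq0 := q_ne_zero hp hq hpq
  have : ((kk p q n * q : ℕ) : ZMod p) = ((n : ℕ) : ZMod p) := by
    push_cast
    rw [kk, ZMod.natCast_val, ZMod.cast_id]
    rw [mul_assoc, inv_mul_cancel₀ hq0, mul_one]
  exact (ZMod.natCast_eq_natCast_iff _ _ _).mp this

lemma kk_unique (hp : p.Prime) (hq : q.Prime) (hpq : p < q) {n k : ℕ}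
    (hk : k < p) (h : (k * q) % p = n % p) : kk p q n = k := by
  haveI := Fact.mk hp
  have hq0 := q_ne_zero hp hq hpq
  have hcast : ((k * q : ℕ) : ZMod p) = ((n : ℕ) : ZMod p) :=
    (ZMod.natCast_eq_natCast_iff _ _ _).mpr h
  push_cast at hcast
  have : ((n : ZMod p)) * (q : ZMod p)⁻¹ = (k : ZMod p) := by
    rw [← hcast, mul_assoc, mul_inv_cancel₀ hq0, mul_one]
  rw [kk, this, ZMod.val_cast_of_lt hk]

lemma kk_add_p (hp : p.Prime) (n : ℕ) : kk p q (n + p) = kk p q n := by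
  unfold kk
  congr 2
  push_cast
  simp [ZMod.natCast_self]

/-- if `a ≡ b (mod p)` and `b < a ≤ b + p` then `a = b + p`. -/
lemma eq_add_of_modeq_close (hp0 : 0 < p) {a b : ℕ} (h : a % p = b % p)
    (h1 : b < a) (h2 : a ≤ b + p) : a = b + p := by
  have hd : p ∣ a - b := (Nat.modEq_iff_dvd' h1.le).mp h.symm
  obtain ⟨c, hc⟩ := hd
  rcases c with _ | _ | c
  · omega
  · omega
  · exfalso
    have hle : p * (c + 1 + 1) ≤ p * 1 := by rw [mul_one]; omega
    have := Nat.le_of_mul_le_mul_left hle hp0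
    omega

lemma exists_shift (hp0 : 0 < p) (y R : ℕ) (hR : R < p) :
    ∃ t, t < p ∧ (y + t) % p = R := by
  have hyp : y % p < p := Nat.mod_lt _ hp0
  rcases le_or_gt (y % p) R with h | h
  · refine ⟨R - y % p, by omega, ?_⟩
    conv_lhs => rw [Nat.add_mod]
    rw [Nat.mod_eq_of_lt (show R - y % p < p by omega),
      show y % p + (R - y % p) = R by omega, Nat.mod_eq_of_lt hR]
  · refine ⟨R + p - y % p, by omega, ?_⟩
    conv_lhs => rw [Nat.add_mod]
    rw [Nat.mod_eq_of_lt (show R + p - y % p < p by omega),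
      show y % p + (R + p - y % p) = R + p by omega, Nat.add_mod_right, Nat.mod_eq_of_lt hR]

/-! ### Polynomial identities -/

lemma X_pow_prime_sub_one (hp : p.Prime) :
    (X : ℤ[X]) ^ p - 1 = (X - 1) * cyclotomic p ℤ := by
  have h := prod_cyclotomic_eq_X_pow_sub_one hp.pos ℤ
  rw [hp.divisors] at h
  rw [← h, Finset.prod_insert (by simp [hp.one_lt.ne]), Finset.prod_singleton, cyclotomic_one]

lemma divisors_pq (hp : p.Prime) (hq : q.Prime) (hpq : p < q) :
    (p * q).divisors = {1, p, q, p * q} := by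
  rw [Nat.divisors_mul, hp.divisors, hq.divisors]
  ext n
  simp only [Finset.mem_mul, Finset.mem_insert, Finset.mem_singleton]
  constructor
  · rintro ⟨y, hy, z, hz, rfl⟩
    rcases hy with rfl | rfl <;> rcases hz with rfl | rfl <;> simp
  · rintro (rfl | rfl | rfl | rfl)
    · exact ⟨_, Or.inl rfl, _, Or.inl rfl, one_mul _⟩
    · exact ⟨_, Or.inr rfl, _, Or.inl rfl, mul_one _⟩
    · exact ⟨_, Or.inl rfl, _, Or.inr rfl, one_mul _⟩
    · exact ⟨_, Or.inr rfl, _, Or.inr rfl, rfl⟩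

lemma X_pow_pq_sub_one (hp : p.Prime) (hq : q.Prime) (hpq : p < q) :
    (X : ℤ[X]) ^ (p * q) - 1 =
      ((X - 1) * cyclotomic p ℤ) * (cyclotomic q ℤ * cyclotomic (p * q) ℤ) := by
  have hpos : 0 < p * q := Nat.mul_pos hp.pos hq.pos
  have h := prod_cyclotomic_eq_X_pow_sub_one hpos ℤ
  rw [divisors_pq hp hq hpq] at h
  have h2p := hp.two_le
  have h2q := hq.two_le
  have hppq : p < p * q := (Nat.lt_mul_iff_one_lt_right hp.pos).mpr hq.one_lt
  have hqpq : q < p * q := (Nat.lt_mul_iff_one_lt_left hq.pos).mpr hp.one_lt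
  rw [← h]
  rw [Finset.prod_insert (by simp; omega), Finset.prod_insert (by simp; omega),
    Finset.prod_insert (by simp; omega), Finset.prod_singleton, cyclotomic_one]
  ring

lemma cyclo_id (hp : p.Prime) (hq : q.Prime) (hpq : p < q) :
    cyclotomic (p * q) ℤ * ((X : ℤ[X]) ^ p - 1) =
      (X - 1) * ∑ i ∈ Finset.range p, ((X : ℤ[X]) ^ q) ^ i := by
  have hq1 : (X : ℤ[X]) ^ q - 1 ≠ 0 := by
    have := X_pow_sub_C_ne_zero hq.pos (1 : ℤ); simpa using this
  apply mul_right_cancel₀ hq1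
  have hgeom : (∑ i ∈ Finset.range p, ((X : ℤ[X]) ^ q) ^ i) * ((X : ℤ[X]) ^ q - 1)
      = (X : ℤ[X]) ^ (p * q) - 1 := by
    rw [geom_sum_mul, ← pow_mul, mul_comm q p]
  calc cyclotomic (p * q) ℤ * ((X : ℤ[X]) ^ p - 1) * ((X : ℤ[X]) ^ q - 1)
      = (X - 1) * ((X : ℤ[X]) ^ (p * q) - 1) := by
        rw [X_pow_pq_sub_one hp hq hpq, X_pow_prime_sub_one hp, X_pow_prime_sub_one hq]; ring
    _ = (X - 1) * (∑ i ∈ Finset.range p, ((X : ℤ[X]) ^ q) ^ i) * ((X : ℤ[X]) ^ q - 1) := by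
        rw [← hgeom]; ring

lemma coeff_G (hq : q.Prime) (m : ℕ) :
    (∑ i ∈ Finset.range p, ((X : ℤ[X]) ^ q) ^ i).coeff m = gf p q m := by
  rw [finset_sum_coeff]
  simp_rw [← pow_mul, coeff_X_pow]
  unfold gf
  by_cases h : m % q = 0 ∧ m / q < p
  · rw [if_pos h]
    have hs := Finset.sum_eq_single_of_mem (s := Finset.range p)
      (f := fun i => if m = q * i then (1 : ℤ) else 0) (m / q)
      (Finset.mem_range.mpr h.2)
      (by
        intro i _ hi
        show (if m = q * i then (1 : ℤ) else 0) = 0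
        rw [if_neg]
        intro hmi
        exact hi (by rw [hmi, Nat.mul_div_cancel_left _ hq.pos]))
    rw [hs]
    show (if m = q * (m / q) then (1 : ℤ) else 0) = 1
    rw [if_pos (Nat.mul_div_cancel' (Nat.dvd_of_mod_eq_zero h.1)).symm]
  · rw [if_neg h]
    apply Finset.sum_eq_zero
    intro i hi
    rw [if_neg]
    intro hmi
    apply h
    subst hmi
    constructor
    · exact Nat.mul_mod_right q i
    · rw [Nat.mul_div_cancel_left _ hq.pos]; exact Finset.mem_range.mp hi

/-! ### The coefficient recursion -/

lemma gf_eq (hp : p.Prime) (hq : q.Prime) (hpq : p < q) (m : ℕ) :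
    gf p q m = if kk p q m * q = m then 1 else 0 := by
  unfold gf
  by_cases h : m % q = 0 ∧ m / q < p
  · rw [if_pos h, if_pos]
    have hm : m / q * q = m := Nat.div_mul_cancel (Nat.dvd_of_mod_eq_zero h.1)
    have hk : kk p q m = m / q := kk_unique hp hq hpq h.2 (by rw [hm])
    rw [hk, hm]
  · rw [if_neg h, if_neg]
    intro he
    apply h
    constructor
    · rw [← he]; exact Nat.mul_mod_left _ _
    · rw [← he, Nat.mul_div_cancel _ hq.pos]; exact kk_lt hp m

lemma Bf_rec (hp : p.Prime) (hq : q.Prime) (hpq : p < q) (n : ℕ) :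
    Bf p q (n + p) = Bf p q n + gf p q (n + p) := by
  have hkk := kk_add_p (q := q) hp n
  have hklt := kk_lt (q := q) hp n
  have hkm := kk_mod hp hq hpq n
  rw [gf_eq hp hq hpq]
  unfold Bf
  rw [hkk]
  rcases le_or_gt (kk p q n * q) n with h1 | h1
  · rw [if_pos h1, if_pos (by omega : kk p q n * q ≤ n + p), if_neg (by omega : ¬ kk p q n * q = n + p)]
    norm_num
  · rcases le_or_gt (kk p q n * q) (n + p) with h2 | h2
    · have he : kk p q n * q = n + p := eq_add_of_modeq_close hp.pos hkm h1 h2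
      rw [if_pos h2, if_neg (by omega : ¬ kk p q n * q ≤ n), if_pos he]
      norm_num
    · rw [if_neg (by omega : ¬ kk p q n * q ≤ n + p), if_neg (by omega : ¬ kk p q n * q ≤ n),
        if_neg (by omega : ¬ kk p q n * q = n + p)]
      norm_num

lemma coeff_rec (hp : p.Prime) (hq : q.Prime) (hpq : p < q) (n : ℕ) :
    (cyclotomic (p * q) ℤ).coeff n =
      (cyclotomic (p * q) ℤ).coeff (n + p) + gf p q (n + p - 1) - gf p q (n + p) := by
  obtain ⟨pp, rfl⟩ : ∃ pp, p = pp + 1 := ⟨p - 1, by have := hp.pos; omega⟩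
  have h := congrArg (fun f : ℤ[X] => f.coeff (n + (pp + 1))) (cyclo_id hp hq hpq)
  rw [mul_sub, mul_one, coeff_sub, coeff_mul_X_pow] at h
  rw [sub_mul, one_mul, coeff_sub] at h
  rw [show n + (pp + 1) = (n + pp) + 1 from rfl, coeff_X_mul] at h
  rw [coeff_G hq, coeff_G hq] at h
  rw [show n + (pp + 1) - 1 = n + pp by omega]
  rw [show n + (pp + 1) = (n + pp) + 1 from rfl]
  linarith [h]

/-! ### Values of Bf -/

lemma natDegree_cyclo_pq (hp : p.Prime) (hq : q.Prime) (hpq : p < q) :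
    (cyclotomic (p * q) ℤ).natDegree = (p - 1) * (q - 1) := by
  rw [natDegree_cyclotomic, Nat.totient_mul ((Nat.coprime_primes hp hq).mpr hpq.ne),
    Nat.totient_prime hp, Nat.totient_prime hq]

lemma Bf_high (hp : p.Prime) {n : ℕ} (h : (p - 1) * q ≤ n) : Bf p q n = 1 := by
  unfold Bf
  rw [if_pos]
  calc kk p q n * q ≤ (p - 1) * q :=
        Nat.mul_le_mul_right q (by have := kk_lt (q := q) hp n; omega)
    _ ≤ n := h

lemma Bf_small (hp : p.Prime) (hq : q.Prime) (hpq : p < q) {n : ℕ}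
    (h1 : 1 ≤ n) (h2 : n < p) : Bf p q n = 0 := by
  have hk : kk p q n ≠ 0 := by
    intro h0
    have hm := kk_mod hp hq hpq n
    rw [h0, zero_mul, Nat.zero_mod, Nat.mod_eq_of_lt h2] at hm
    omega
  unfold Bf
  rw [if_neg]
  have h3 : q ≤ kk p q n * q := Nat.le_mul_of_pos_left q (by omega)
  omega

lemma Bf_zero (hp : p.Prime) (hq : q.Prime) (hpq : p < q) : Bf p q 0 = 1 := by
  unfold Bf
  have hk : kk p q 0 = 0 := kk_unique hp hq hpq hp.pos (by simp)
  rw [hk]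
  simp

lemma Bf_p (hp : p.Prime) (hq : q.Prime) (hpq : p < q) : Bf p q p = 1 := by
  unfold Bf
  have hk : kk p q p = 0 := kk_unique hp hq hpq hp.pos (by simp)
  rw [hk]
  simp

lemma gf_pm1 (hp : p.Prime) (hq : q.Prime) (hpq : p < q) : gf p q (p - 1) = 0 := by
  unfold gf
  rw [if_neg]
  rintro ⟨h1, -⟩
  rw [Nat.mod_eq_of_lt (by have := hp.two_le; omega : p - 1 < q)] at h1
  have := hp.two_le
  omega

/-! ### The main coefficient formula -/

lemma main_coeff (hp : p.Prime) (hq : q.Prime) (hpq : p < q) (n : ℕ) :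
    (cyclotomic (p * q) ℤ).coeff n = Df p q n := by
  have h2p := hp.two_le
  have h2q := hq.two_le
  have hpq1 : (p - 1) * q + q = p * q := by
    calc (p - 1) * q + q = ((p - 1) + 1) * q := by ring
      _ = p * q := by rw [Nat.sub_add_cancel (by omega : 1 ≤ p)]
  have hstep : ∀ m, (cyclotomic (p * q) ℤ).coeff (m + p) = Df p q (m + p) →
      (cyclotomic (p * q) ℤ).coeff m = Df p q m := by
    intro m ih
    have hrec := coeff_rec hp hq hpq m
    rcases Nat.eq_zero_or_pos m with rfl | hm
    · rw [hrec, ih]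
      unfold Df
      rw [if_pos rfl, if_neg (by omega : ¬ 0 + p = 0)]
      have hB1 := Bf_rec hp hq hpq 0
      have e2 : Bf p q (0 + p - 1) = 0 := by
        rw [show 0 + p - 1 = p - 1 by omega]
        exact Bf_small hp hq hpq (by omega) (by omega)
      have e3 : gf p q (0 + p - 1) = 0 := by
        rw [show 0 + p - 1 = p - 1 by omega]
        exact gf_pm1 hp hq hpq
      rw [e2, e3, hB1]
      ring
    · obtain ⟨m', rfl⟩ : ∃ m', m = m' + 1 := ⟨m - 1, by omega⟩
      have hB1 := Bf_rec hp hq hpq (m' + 1)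
      have hB2 := Bf_rec hp hq hpq m'
      rw [hrec, ih]
      unfold Df
      rw [if_neg (by omega : ¬ m' + 1 + p = 0), if_neg (by omega : ¬ m' + 1 = 0)]
      rw [show m' + 1 + p - 1 = m' + p by omega, show m' + 1 - 1 = m' from rfl]
      linarith [hB1, hB2]
  suffices H : ∀ t n, p * q ≤ n + t * p → (cyclotomic (p * q) ℤ).coeff n = Df p q n by
    refine H (p * q) n ?_
    have h1 : p * q ≤ p * q * p := Nat.le_mul_of_pos_right _ hp.pos
    omega
  intro t
  induction t with
  | zero =>
    intro n hn
    simp only [Nat.zero_mul, Nat.add_zero] at hn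
    have hpqpos : 0 < p * q := Nat.mul_pos hp.pos hq.pos
    have hdeg : (cyclotomic (p * q) ℤ).natDegree < n := by
      rw [natDegree_cyclo_pq hp hq hpq]
      have h1 : (p - 1) * (q - 1) ≤ (p - 1) * q := Nat.mul_le_mul_left _ (by omega)
      omega
    rw [coeff_eq_zero_of_natDegree_lt hdeg]
    unfold Df
    rw [if_neg (by omega : ¬ n = 0)]
    rw [Bf_high hp (by omega : (p - 1) * q ≤ n), Bf_high hp (by omega : (p - 1) * q ≤ n - 1)]
    ring
  | succ t iht =>
    intro n hn
    rw [Nat.succ_mul] at hn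
    by_cases hcase : p * q ≤ n + t * p
    · exact iht n hcase
    · exact hstep n (iht (n + p) (by omega))

/-! ### The key density lemma -/

lemma key (hp : p.Prime) (hq : q.Prime) (hpq : p < q) {y : ℕ}
    (hy : y + 1 ≤ (p - 1) * (q - 1)) :
    ∃ m ∈ (cyclotomic (p * q) ℤ).support, y < m ∧ m ≤ y + (p - 1) := by
  have h2p := hp.two_le
  have h2q := hq.two_le
  by_contra hcon
  push_neg at hcon
  have hzero : ∀ t, 1 ≤ t → t ≤ p - 1 → (cyclotomic (p * q) ℤ).coeff (y + t) = 0 := by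
    intro t h1 h2
    by_contra hc
    have := hcon (y + t) (Polynomial.mem_support_iff.mpr hc) (by omega)
    omega
  have hconst : ∀ t, t ≤ p - 1 → Bf p q (y + t) = Bf p q y := by
    intro t
    induction t with
    | zero => intro _; rw [Nat.add_zero]
    | succ t iht =>
      intro ht
      have hc := hzero (t + 1) (by omega) ht
      rw [main_coeff hp hq hpq] at hc
      unfold Df at hc
      rw [if_neg (by omega : ¬ y + (t + 1) = 0)] at hc
      rw [show y + (t + 1) - 1 = y + t by omega] at hc
      have heq : Bf p q (y + (t + 1)) = Bf p q (y + t) := by linarith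
      rw [heq, iht (by omega)]
  obtain ⟨t0, ht0p, ht0⟩ := exists_shift hp.pos y 0 hp.pos
  obtain ⟨t1, ht1p, ht1⟩ := exists_shift hp.pos y (((p - 1) * q) % p) (Nat.mod_lt _ hp.pos)
  have hB0 : Bf p q (y + t0) = 1 := by
    have hk : kk p q (y + t0) = 0 := kk_unique hp hq hpq hp.pos (by simp [ht0])
    unfold Bf
    rw [hk]
    simp
  have hB1 : Bf p q (y + t1) = 0 := by
    have hk : kk p q (y + t1) = p - 1 := kk_unique hp hq hpq (by omega) ht1.symm
    unfold Bf
    rw [hk, if_neg]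
    have hq1 : (p - 1) * q = (p - 1) * (q - 1) + (p - 1) := by
      calc (p - 1) * q = (p - 1) * ((q - 1) + 1) := by rw [show q - 1 + 1 = q by omega]
        _ = (p - 1) * (q - 1) + (p - 1) := by ring
    omega
  have e0 := hconst t0 (by omega)
  have e1 := hconst t1 (by omega)
  rw [hB0] at e0
  rw [hB1] at e1
  omega

end BinaryCycloAux

theorem cyclotomic_binary_maxGap (p q : ℕ) (hp : p.Prime) (hq : q.Prime) (hpq : p < q) :
    maxGap (cyclotomic (p * q) ℤ) = p - 1 := by
  have h2p := hp.two_le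
  have h2q := hq.two_le
  have hc1 : (cyclotomic (p * q) ℤ).coeff 1 ≠ 0 := by
    rw [BinaryCycloAux.main_coeff hp hq hpq]
    unfold BinaryCycloAux.Df
    rw [if_neg one_ne_zero, show (1 : ℕ) - 1 = 0 from rfl,
      BinaryCycloAux.Bf_zero hp hq hpq,
      BinaryCycloAux.Bf_small hp hq hpq (le_refl 1) (by omega)]
    norm_num
  have hcP : (cyclotomic (p * q) ℤ).coeff p ≠ 0 := by
    rw [BinaryCycloAux.main_coeff hp hq hpq]
    unfold BinaryCycloAux.Df
    rw [if_neg (by omega : ¬ p = 0), BinaryCycloAux.Bf_p hp hq hpq,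
      BinaryCycloAux.Bf_small hp hq hpq (by omega : 1 ≤ p - 1) (by omega)]
    norm_num
  have hmid : ∀ k, 1 < k → k < p → (cyclotomic (p * q) ℤ).coeff k = 0 := by
    intro k hk1 hkp
    rw [BinaryCycloAux.main_coeff hp hq hpq]
    unfold BinaryCycloAux.Df
    rw [if_neg (by omega : ¬ k = 0),
      BinaryCycloAux.Bf_small hp hq hpq (by omega) hkp,
      BinaryCycloAux.Bf_small hp hq hpq (by omega) (by omega)]
    norm_num
  have hdeg : ∀ m ∈ (cyclotomic (p * q) ℤ).support, m ≤ (p - 1) * (q - 1) := by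
    intro m hm
    have := Polynomial.le_natDegree_of_ne_zero (Polynomial.mem_support_iff.mp hm)
    rwa [BinaryCycloAux.natDegree_cyclo_pq hp hq hpq] at this
  unfold maxGap
  apply le_antisymm
  · apply Finset.sup_le
    rintro ⟨a, b⟩ hab
    rw [Finset.mem_filter, Finset.mem_product] at hab
    obtain ⟨⟨ha, hb⟩, hcond⟩ := hab
    simp only at hcond
    obtain ⟨hlt, hbtw⟩ := hcond
    have hble : b ≤ (p - 1) * (q - 1) := hdeg b hb
    obtain ⟨m, hm, ham, hmle⟩ := BinaryCycloAux.key hp hq hpq (y := a) (by omega)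
    have hnb := hbtw m hm
    show b - a ≤ p - 1
    omega
  · have hmem : ((1 : ℕ), p) ∈
        (((cyclotomic (p * q) ℤ).support ×ˢ (cyclotomic (p * q) ℤ).support).filter
          (fun ij => ij.1 < ij.2 ∧ ∀ k ∈ (cyclotomic (p * q) ℤ).support,
            ¬(ij.1 < k ∧ k < ij.2))) := by
      rw [Finset.mem_filter, Finset.mem_product]
      refine ⟨⟨Polynomial.mem_support_iff.mpr hc1, Polynomial.mem_support_iff.mpr hcP⟩, ?_⟩
      refine ⟨by omega, ?_⟩
      intro k hk hcontra
      exact (Polynomial.mem_support_iff.mp hk) (hmid k hcontra.1 hcontra.2)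
    have h := Finset.le_sup (f := fun ij : ℕ × ℕ => ij.2 - ij.1) hmem
    simpa using h
end

section
/- For all odd primes p < q < r, every coefficient of the ternary cyclotomic polynomial Φ_{pqr}(X) has absolute value at most p − 1. -/
open Polynomial Finset

namespace BangTernary

def eF (p q s : ℕ) : ℤ :=
  (if s % (p*q) < p then 1 else 0) - (if q ≤ s % (p*q) ∧ s % (p*q) < q + p then 1 else 0)

lemma not_p_dvd_q {p q : ℕ} (hp : p.Prime) (hq : q.Prime) (hne : p ≠ q) : ¬ p ∣ q := by
  intro hdvd
  rcases (Nat.Prime.eq_one_or_self_of_dvd hq p hdvd) with h1 | h1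
  · exact absurd h1 hp.one_lt.ne'
  · exact hne h1

lemma cast_q_ne_zero {p q : ℕ} (hp : p.Prime) (hq : q.Prime) (hne : p ≠ q) :
    (q : ZMod p) ≠ 0 := by
  rw [Ne, ZMod.natCast_eq_zero_iff]
  exact not_p_dvd_q hp hq hne

lemma rep_unique {p q : ℕ} (hp : p.Prime) (hq : q.Prime) (hpq : p < q) {i j i' j' : ℕ}
    (hj : j < p) (hj' : j' < p) (h : i*p + j*q = i'*p + j'*q) : i = i' ∧ j = j' := by
  haveI : Fact p.Prime := ⟨hp⟩
  have hqz : (q : ZMod p) ≠ 0 := cast_q_ne_zero hp hq hpq.ne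
  have h2 : (j : ZMod p) * (q : ZMod p) = (j' : ZMod p) * (q : ZMod p) := by
    have hc : ((i*p + j*q : ℕ) : ZMod p) = ((i'*p + j'*q : ℕ) : ZMod p) := by
      exact_mod_cast congrArg (fun t : ℕ => (t : ZMod p)) h
    push_cast at hc
    simpa [ZMod.natCast_self] using hc
  have hjj : (j : ZMod p) = (j' : ZMod p) := mul_right_cancel₀ hqz h2
  have hjeq : j = j' := by
    have := congrArg ZMod.val hjj
    rwa [ZMod.val_cast_of_lt hj, ZMod.val_cast_of_lt hj'] at this
  subst hjeq
  have hip : i * p = i' * p := by omega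
  exact ⟨Nat.eq_of_mul_eq_mul_right hp.pos hip, rfl⟩

lemma exists_rho_sigma {p q : ℕ} (hp : p.Prime) (hq : q.Prime) (hpq : p < q) :
    ∃ ρ σ : ℕ, ρ + 2 ≤ q ∧ σ + 2 ≤ p ∧ (ρ+1)*p + (σ+1)*q = p*q + 1 := by
  haveI : Fact p.Prime := ⟨hp⟩
  haveI : NeZero p := ⟨hp.pos.ne'⟩
  have hqz : (q : ZMod p) ≠ 0 := cast_q_ne_zero hp hq hpq.ne
  set u := ((q : ZMod p)⁻¹).val with hu
  have hulp : u < p := ZMod.val_lt _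
  have hcast_u : ((u : ℕ) : ZMod p) = (q : ZMod p)⁻¹ := by
    rw [hu, ZMod.natCast_val, ZMod.cast_id]
  have huz : u ≠ 0 := by
    intro h0
    rw [h0] at hcast_u
    exact hqz (inv_eq_zero.mp (by simpa using hcast_u.symm))
  have h5 : u*q ≤ p*q := Nat.mul_le_mul_right q (le_of_lt hulp)
  have hule : u*q ≤ p*q + 1 := by omega
  set N := p*q + 1 - u*q with hN
  have hdvd : p ∣ N := by
    rw [← ZMod.natCast_eq_zero_iff]
    have h6 : ((N : ℕ) : ZMod p) = ((p*q+1 : ℕ) : ZMod p) - ((u*q : ℕ) : ZMod p) := by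
      rw [hN, Nat.cast_sub hule]
    rw [h6]
    push_cast
    rw [hcast_u]
    simp [ZMod.natCast_self, inv_mul_cancel₀ hqz]
  obtain ⟨k, hk⟩ := hdvd
  have heq : p*q + 1 = u*q + p*k := by omega
  have hk1 : 1 ≤ k := by
    rcases Nat.eq_zero_or_pos k with h0 | h0
    · rw [h0, Nat.mul_zero] at heq; omega
    · exact h0
  have hkq : k + 1 ≤ q := by
    by_contra hcon
    have h2 : q ≤ k := by omega
    have h3 : p*q ≤ p*k := Nat.mul_le_mul_left p h2
    have h4 : q ≤ u*q := Nat.le_mul_of_pos_left q (by omega)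
    have := hq.two_le
    omega
  refine ⟨k - 1, u - 1, by omega, by omega, ?_⟩
  have e1 : k - 1 + 1 = k := by omega
  have e2 : u - 1 + 1 = u := by omega
  rw [e1, e2]
  have : k * p = p * k := Nat.mul_comm k p
  omega

lemma zcover {p : ℕ} (hp : p.Prime) (σ : ℕ) (hσ : σ + 2 ≤ p)
    (c c' d : ZMod p) (hcc : c ≠ c') (hd : d ≠ 0)
    (H : ∀ y : ZMod p, (∃ j : ℕ, j ≤ σ ∧ y = c + d * j) ∨
      (∃ j : ℕ, σ + 1 ≤ j ∧ j ≤ p - 1 ∧ y = c' + d * j)) : False := by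
  haveI : Fact p.Prime := ⟨hp⟩
  haveI : NeZero p := ⟨hp.pos.ne'⟩
  classical
  set B := (Finset.range (σ+1)).image (fun j : ℕ => c + d * (j : ZMod p)) with hBdef
  set C := (Finset.Icc (σ+1) (p-1)).image (fun j : ℕ => c' + d * (j : ZMod p)) with hCdef
  set A := (Finset.Icc (σ+1) (p-1)).image (fun j : ℕ => c + d * (j : ZMod p)) with hAdef
  have hinj : ∀ (e : ZMod p) (j j' : ℕ), j < p → j' < p →
      e + d*(j : ZMod p) = e + d*(j' : ZMod p) → j = j' := by
    intro e j j' hjp hj'p he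
    have h1 : (j : ZMod p) = (j' : ZMod p) := mul_left_cancel₀ hd (add_left_cancel he)
    have := congrArg ZMod.val h1
    rwa [ZMod.val_cast_of_lt hjp, ZMod.val_cast_of_lt hj'p] at this
  have cardB : B.card = σ + 1 := by
    rw [hBdef, Finset.card_image_of_injOn, Finset.card_range]
    intro a ha b hb hab
    simp only [Finset.coe_range, Set.mem_Iio] at ha hb
    exact hinj c a b (by omega) (by omega) hab
  have cardC : C.card = p - 1 - σ := by
    rw [hCdef, Finset.card_image_of_injOn, Nat.card_Icc]
    · omega
    · intro a ha b hb hab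
      simp only [Finset.coe_Icc, Set.mem_Icc] at ha hb
      exact hinj c' a b (by omega) (by omega) hab
  have cardA : A.card = p - 1 - σ := by
    rw [hAdef, Finset.card_image_of_injOn, Nat.card_Icc]
    · omega
    · intro a ha b hb hab
      simp only [Finset.coe_Icc, Set.mem_Icc] at ha hb
      exact hinj c a b (by omega) (by omega) hab
  have huniv : (Finset.univ : Finset (ZMod p)).card = p := by
    simp [ZMod.card p]
  have hBC : (Finset.univ : Finset (ZMod p)) ⊆ B ∪ C := by
    intro y _
    rcases H y with ⟨j, hj, hy⟩ | ⟨j, hj1, hj2, hy⟩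
    · exact Finset.mem_union_left _ (Finset.mem_image.2 ⟨j, Finset.mem_range.2 (by omega), hy.symm⟩)
    · exact Finset.mem_union_right _ (Finset.mem_image.2 ⟨j, Finset.mem_Icc.2 ⟨hj1, hj2⟩, hy.symm⟩)
  have hBA : (Finset.univ : Finset (ZMod p)) ⊆ B ∪ A := by
    intro y _
    have hy : y = c + d * (((d⁻¹ * (y - c)).val : ℕ) : ZMod p) := by
      rw [ZMod.natCast_val, ZMod.cast_id]
      field_simp
      ring
    set k := ((d⁻¹ * (y - c)).val) with hkdef
    have hkp : k < p := ZMod.val_lt _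
    by_cases hks : k ≤ σ
    · exact Finset.mem_union_left _ (Finset.mem_image.2 ⟨k, Finset.mem_range.2 (by omega), hy.symm⟩)
    · exact Finset.mem_union_right _
        (Finset.mem_image.2 ⟨k, Finset.mem_Icc.2 ⟨by omega, by omega⟩, hy.symm⟩)
  have hsum : σ + 1 + (p - 1 - σ) = p := by omega
  -- B ∪ A = univ, disjoint, so A = univ \ B ; same for C
  have hAeq : A = Finset.univ \ B := by
    have hcardBA : (B ∪ A).card = p := by
      refine le_antisymm (le_trans (Finset.card_le_card (Finset.subset_univ _)) (by omega)) ?_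
      calc p = (Finset.univ : Finset (ZMod p)).card := huniv.symm
      _ ≤ (B ∪ A).card := Finset.card_le_card hBA
    have hdisj : (B ∩ A).card = 0 := by
      have := Finset.card_union_add_card_inter B A
      omega
    have hsubset : A ⊆ Finset.univ \ B := by
      intro a ha
      rw [Finset.mem_sdiff]
      refine ⟨Finset.mem_univ _, fun hb => ?_⟩
      have : a ∈ B ∩ A := Finset.mem_inter.2 ⟨hb, ha⟩
      simp [Finset.card_eq_zero.mp hdisj] at this
    refine Finset.eq_of_subset_of_card_le hsubset ?_
    rw [Finset.card_sdiff_of_subset (Finset.subset_univ _)]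
    omega
  have hCeq : C = Finset.univ \ B := by
    have hcardBC : (B ∪ C).card = p := by
      refine le_antisymm (le_trans (Finset.card_le_card (Finset.subset_univ _)) (by omega)) ?_
      calc p = (Finset.univ : Finset (ZMod p)).card := huniv.symm
      _ ≤ (B ∪ C).card := Finset.card_le_card hBC
    have hdisj : (B ∩ C).card = 0 := by
      have := Finset.card_union_add_card_inter B C
      omega
    have hsubset : C ⊆ Finset.univ \ B := by
      intro a ha
      rw [Finset.mem_sdiff]
      refine ⟨Finset.mem_univ _, fun hb => ?_⟩
      have : a ∈ B ∩ C := Finset.mem_inter.2 ⟨hb, ha⟩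
      simp [Finset.card_eq_zero.mp hdisj] at this
    refine Finset.eq_of_subset_of_card_le hsubset ?_
    rw [Finset.card_sdiff_of_subset (Finset.subset_univ _)]
    omega
  have hAC : A = C := by rw [hAeq, hCeq]
  set δ := c' - c with hδdef
  have hδ : δ ≠ 0 := sub_ne_zero_of_ne (Ne.symm hcc)
  have hCA : C = A.image (fun x => δ + x) := by
    rw [hAdef, hCdef, Finset.image_image]
    apply Finset.image_congr
    intro x _
    simp only [Function.comp_apply, hδdef]
    ring
  have hstep : ∀ a ∈ A, δ + a ∈ A := by
    intro a ha
    rw [hAC, hCA]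
    exact Finset.mem_image_of_mem _ ha
  have hAne : A.Nonempty := by
    rw [← Finset.card_pos, cardA]; omega
  obtain ⟨a₀, ha₀⟩ := hAne
  have hiter : ∀ k : ℕ, ((k : ZMod p) * δ + a₀) ∈ A := by
    intro k
    induction k with
    | zero => simpa using ha₀
    | succ n ih =>
      have : ((n+1 : ℕ) : ZMod p) * δ + a₀ = δ + ((n : ℕ) * δ + a₀) := by
        push_cast; ring
      rw [this]
      exact hstep _ ih
  have hiterinj : Set.InjOn (fun k : ℕ => (k : ZMod p) * δ + a₀) (Finset.range p) := by
    intro a ha b hb hab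
    simp only [Finset.coe_range, Set.mem_Iio] at ha hb
    have h1 : (a : ZMod p) = (b : ZMod p) := mul_right_cancel₀ hδ (add_right_cancel hab)
    have := congrArg ZMod.val h1
    rwa [ZMod.val_cast_of_lt ha, ZMod.val_cast_of_lt hb] at this
  have hsub : (Finset.range p).image (fun k : ℕ => (k : ZMod p) * δ + a₀) ⊆ A := by
    intro x hx
    obtain ⟨k, _, rfl⟩ := Finset.mem_image.1 hx
    exact hiter k
  have := Finset.card_le_card hsub
  rw [Finset.card_image_of_injOn hiterinj, Finset.card_range, cardA] at this
  omega


lemma cyclo_pq_mul {p q : ℕ} (hp : p.Prime) (hq : q.Prime) (hpq : p < q) :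
    cyclotomic (p*q) ℤ * (((X:ℤ[X])^p - 1) * ((X:ℤ[X])^q - 1))
      = ((X:ℤ[X])^(p*q) - 1) * (X - 1) := by
  haveI : Fact p.Prime := ⟨hp⟩
  have hΦp : (cyclotomic p ℤ) * (X - 1) = X^p - 1 := cyclotomic_prime_mul_X_sub_one ℤ p
  have e1 : expand ℤ q (cyclotomic p ℤ) = cyclotomic (p*q) ℤ * cyclotomic p ℤ :=
    cyclotomic_expand_eq_cyclotomic_mul hq (not_p_dvd_q hq hp hpq.ne') ℤ
  have hexp : expand ℤ q (cyclotomic p ℤ) * ((X:ℤ[X])^q - 1) = X^(p*q) - 1 := by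
    rw [cyclotomic_prime ℤ p, map_sum]
    simp only [map_pow, Polynomial.expand_X]
    rw [geom_sum_mul, ← pow_mul, mul_comm q p]
  calc cyclotomic (p*q) ℤ * (((X:ℤ[X])^p - 1) * ((X:ℤ[X])^q - 1))
      = (cyclotomic (p*q) ℤ * cyclotomic p ℤ) * ((X:ℤ[X])^q - 1) * (X - 1) := by
        rw [← hΦp]; ring
    _ = expand ℤ q (cyclotomic p ℤ) * ((X:ℤ[X])^q - 1) * (X - 1) := by rw [← e1]
    _ = ((X:ℤ[X])^(p*q) - 1) * (X - 1) := by rw [hexp]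

lemma X_pow_sub_one_ne_zero' {k : ℕ} (hk : 0 < k) : ((X:ℤ[X])^k - 1) ≠ 0 := by
  intro h
  have h0 : ((X:ℤ[X])^k - 1).coeff 0 = -1 := by
    simp [Polynomial.coeff_X_pow, hk.ne', hk.ne]
  rw [h] at h0
  simp at h0

lemma cyclo_pq_eq {p q ρ σ : ℕ} (hp : p.Prime) (hq : q.Prime) (hpq : p < q)
    (key : (ρ+1)*p + (σ+1)*q = p*q + 1) (hρ : ρ + 2 ≤ q) (hσ : σ + 2 ≤ p) :
    cyclotomic (p*q) ℤ
      = (∑ x ∈ range (ρ+1) ×ˢ range (σ+1), (X:ℤ[X])^(x.1*p + x.2*q))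
        - ∑ x ∈ range (q-1-ρ) ×ˢ range (p-1-σ), (X:ℤ[X])^(x.1*p + x.2*q + 1) := by
  have hM : (((X:ℤ[X])^p - 1) * ((X:ℤ[X])^q - 1)) ≠ 0 :=
    mul_ne_zero (X_pow_sub_one_ne_zero' hp.pos) (X_pow_sub_one_ne_zero' hq.pos)
  apply mul_right_cancel₀ hM
  rw [cyclo_pq_mul hp hq hpq]
  symm
  set ρ' := q - 1 - ρ with hρ'
  set σ' := p - 1 - σ with hσ'
  have hρ's : ρ + 1 + ρ' = q := by omega
  have hσ's : σ + 1 + σ' = p := by omega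
  set α := (ρ+1)*p with hα
  set β := (σ+1)*q with hβ
  set γ := ρ'*p with hγ
  set δ := σ'*q with hδ
  have hαγ : α + γ = p*q := by
    rw [hα, hγ, ← Nat.add_mul, hρ's, mul_comm]
  have hβδ : β + δ = p*q := by
    rw [hβ, hδ, ← Nat.add_mul, hσ's]
  have hSA : (∑ x ∈ range (ρ+1) ×ˢ range (σ+1), (X:ℤ[X])^(x.1*p + x.2*q))
      = (∑ i ∈ range (ρ+1), ((X:ℤ[X])^p)^i) * (∑ j ∈ range (σ+1), ((X:ℤ[X])^q)^j) := by
    rw [Finset.sum_mul_sum, Finset.sum_product]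
    refine Finset.sum_congr rfl fun i _ => Finset.sum_congr rfl fun j _ => ?_
    rw [pow_add, pow_mul', pow_mul']
  have hSB : (∑ x ∈ range ρ' ×ˢ range σ', (X:ℤ[X])^(x.1*p + x.2*q + 1))
      = X * ((∑ i ∈ range ρ', ((X:ℤ[X])^p)^i) * (∑ j ∈ range σ', ((X:ℤ[X])^q)^j)) := by
    rw [Finset.sum_product, Finset.sum_mul_sum, Finset.mul_sum]
    refine Finset.sum_congr rfl fun i _ => ?_
    rw [Finset.mul_sum]
    refine Finset.sum_congr rfl fun j _ => ?_
    rw [pow_succ, pow_add, pow_mul', pow_mul']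
    ring
  rw [hSA, hSB]
  have g1 : (∑ i ∈ range (ρ+1), ((X:ℤ[X])^p)^i) * ((X:ℤ[X])^p - 1) = X^α - 1 := by
    rw [geom_sum_mul, ← pow_mul, mul_comm p (ρ+1)]
  have g2 : (∑ j ∈ range (σ+1), ((X:ℤ[X])^q)^j) * ((X:ℤ[X])^q - 1) = X^β - 1 := by
    rw [geom_sum_mul, ← pow_mul, mul_comm q (σ+1)]
  have g3 : (∑ i ∈ range ρ', ((X:ℤ[X])^p)^i) * ((X:ℤ[X])^p - 1) = X^γ - 1 := by
    rw [geom_sum_mul, ← pow_mul, mul_comm p ρ']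
  have g4 : (∑ j ∈ range σ', ((X:ℤ[X])^q)^j) * ((X:ℤ[X])^q - 1) = X^δ - 1 := by
    rw [geom_sum_mul, ← pow_mul, mul_comm q σ']
  calc ((∑ i ∈ range (ρ+1), ((X:ℤ[X])^p)^i) * (∑ j ∈ range (σ+1), ((X:ℤ[X])^q)^j)
        - X * ((∑ i ∈ range ρ', ((X:ℤ[X])^p)^i) * (∑ j ∈ range σ', ((X:ℤ[X])^q)^j)))
        * (((X:ℤ[X])^p - 1) * ((X:ℤ[X])^q - 1))
      = ((∑ i ∈ range (ρ+1), ((X:ℤ[X])^p)^i) * ((X:ℤ[X])^p - 1))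
          * ((∑ j ∈ range (σ+1), ((X:ℤ[X])^q)^j) * ((X:ℤ[X])^q - 1))
        - X * (((∑ i ∈ range ρ', ((X:ℤ[X])^p)^i) * ((X:ℤ[X])^p - 1))
          * ((∑ j ∈ range σ', ((X:ℤ[X])^q)^j) * ((X:ℤ[X])^q - 1))) := by ring
    _ = (X^α - 1)*(X^β-1) - X*((X^γ-1)*(X^δ-1)) := by rw [g1, g2, g3, g4]
    _ = ((X:ℤ[X])^(p*q) - 1) * (X - 1) := by
        have e1 : (X:ℤ[X])^β = X^γ * X := by
          rw [← pow_succ]; congr 1; omega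
        have e2 : (X:ℤ[X])^α = X^δ * X := by
          rw [← pow_succ]; congr 1; omega
        have e3 : (X:ℤ[X])^(p*q) = X^γ * (X^δ * X) := by
          rw [← pow_succ, ← pow_add]; congr 1; omega
        rw [e1, e2, e3]
        ring

lemma coeff_cyclo_pq {p q ρ σ : ℕ} (hp : p.Prime) (hq : q.Prime) (hpq : p < q)
    (key : (ρ+1)*p + (σ+1)*q = p*q + 1) (hρ : ρ + 2 ≤ q) (hσ : σ + 2 ≤ p) (m : ℕ) :
    (cyclotomic (p*q) ℤ).coeff m
      = (if ∃ i ≤ ρ, ∃ j ≤ σ, m = i*p + j*q then (1:ℤ) else 0)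
        - (if ∃ i ≤ q-2-ρ, ∃ j ≤ p-2-σ, m = i*p + j*q + 1 then (1:ℤ) else 0) := by
  rw [cyclo_pq_eq hp hq hpq key hρ hσ, Polynomial.coeff_sub]
  congr 1
  · rw [Polynomial.finset_sum_coeff]
    by_cases hex : ∃ i ≤ ρ, ∃ j ≤ σ, m = i*p + j*q
    · obtain ⟨i₀, hi₀, j₀, hj₀, hm⟩ := hex
      rw [if_pos ⟨i₀, hi₀, j₀, hj₀, hm⟩]
      rw [Finset.sum_eq_single_of_mem (i₀, j₀)
        (Finset.mem_product.2 ⟨Finset.mem_range.2 (by omega), Finset.mem_range.2 (by omega)⟩)]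
      · rw [Polynomial.coeff_X_pow, if_pos hm]
      · intro b hb hne
        rw [Polynomial.coeff_X_pow, if_neg]
        intro hbm
        obtain ⟨hb1, hb2⟩ := Finset.mem_product.1 hb
        rw [Finset.mem_range] at hb1 hb2
        obtain ⟨h1, h2⟩ := rep_unique hp hq hpq (i := b.1) (j := b.2) (i' := i₀) (j' := j₀)
          (by omega) (by omega) (by omega)
        exact hne (Prod.ext h1 h2)
    · rw [if_neg hex]
      apply Finset.sum_eq_zero
      intro b hb
      rw [Polynomial.coeff_X_pow, if_neg]
      intro hbm
      obtain ⟨hb1, hb2⟩ := Finset.mem_product.1 hb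
      rw [Finset.mem_range] at hb1 hb2
      exact hex ⟨b.1, by omega, b.2, by omega, hbm⟩
  · rw [Polynomial.finset_sum_coeff]
    by_cases hex : ∃ i ≤ q-2-ρ, ∃ j ≤ p-2-σ, m = i*p + j*q + 1
    · obtain ⟨i₀, hi₀, j₀, hj₀, hm⟩ := hex
      rw [if_pos ⟨i₀, hi₀, j₀, hj₀, hm⟩]
      rw [Finset.sum_eq_single_of_mem (i₀, j₀)
        (Finset.mem_product.2 ⟨Finset.mem_range.2 (by omega), Finset.mem_range.2 (by omega)⟩)]
      · rw [Polynomial.coeff_X_pow, if_pos hm]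
      · intro b hb hne
        rw [Polynomial.coeff_X_pow, if_neg]
        intro hbm
        obtain ⟨hb1, hb2⟩ := Finset.mem_product.1 hb
        rw [Finset.mem_range] at hb1 hb2
        obtain ⟨h1, h2⟩ := rep_unique hp hq hpq (i := b.1) (j := b.2) (i' := i₀) (j' := j₀)
          (by omega) (by omega) (by omega)
        exact hne (Prod.ext h1 h2)
    · rw [if_neg hex]
      apply Finset.sum_eq_zero
      intro b hb
      rw [Polynomial.coeff_X_pow, if_neg]
      intro hbm
      obtain ⟨hb1, hb2⟩ := Finset.mem_product.1 hb
      rw [Finset.mem_range] at hb1 hb2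
      exact hex ⟨b.1, by omega, b.2, by omega, hbm⟩



lemma eF_period (p q t : ℕ) : eF p q (t + p*q) = eF p q t := by
  simp [eF, Nat.add_mod_right]

lemma eF_identity {p q : ℕ} (hp2 : 2 ≤ p) (hpq : p < q) (n : ℕ) :
    (if p*q+1 ≤ n then eF p q (n - (p*q+1)) else 0)
      - (if p*q ≤ n then eF p q (n - p*q) else 0)
      - (if 1 ≤ n then eF p q (n-1) else 0) + eF p q n
    = ((if n = p+q then (1:ℤ) else 0) - (if n = p then 1 else 0)
        - (if n = q then 1 else 0) + (if n = 0 then 1 else 0)) := by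
  have hqp : q + p + 1 ≤ p*q := by nlinarith
  rcases lt_trichotomy n (p*q) with hn | hn | hn
  · -- n < p*q
    rw [if_neg (by omega), if_neg (by omega)]
    rcases Nat.eq_zero_or_pos n with h0 | h0
    · subst h0
      simp [eF, Nat.zero_mod]
      omega
    · rw [if_pos (by omega : 1 ≤ n)]
      have e1 : n % (p*q) = n := Nat.mod_eq_of_lt hn
      have e2 : (n-1) % (p*q) = n-1 := Nat.mod_eq_of_lt (by omega)
      simp only [eF, e1, e2]
      have : ¬ n = 0 := by omega
      split_ifs <;> omega
  · -- n = p*q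
    subst hn
    rw [if_neg (by omega), if_pos le_rfl, if_pos (by nlinarith), Nat.sub_self]
    have e1 : (p*q) % (p*q) = 0 := Nat.mod_self _
    have e2 : (p*q-1) % (p*q) = p*q-1 := Nat.mod_eq_of_lt (by omega)
    simp only [eF, e1, e2, Nat.zero_mod]
    split_ifs <;> omega
  · -- n > p*q
    have h1 : p*q+1 ≤ n := hn
    rw [if_pos h1, if_pos (by omega), if_pos (by omega)]
    have e1 : eF p q n = eF p q (n - p*q) := by
      conv_lhs => rw [show n = (n - p*q) + p*q by omega]
      exact eF_period p q _
    have e2 : eF p q (n-1) = eF p q (n - (p*q+1)) := by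
      conv_lhs => rw [show n - 1 = (n - (p*q+1)) + p*q by omega]
      exact eF_period p q _
    rw [e1, e2, if_neg (by omega), if_neg (by omega), if_neg (by omega), if_neg (by omega)]
    ring

lemma E_mul {p q : ℕ} (hp : p.Prime) (hq : q.Prime) (hpq : p < q) :
    PowerSeries.mk (eF p q) * (((PowerSeries.X : PowerSeries ℤ)^(p*q) - 1) * (PowerSeries.X - 1))
      = ((PowerSeries.X : PowerSeries ℤ)^p - 1) * ((PowerSeries.X : PowerSeries ℤ)^q - 1) := by
  have hL : PowerSeries.mk (eF p q) * (((PowerSeries.X : PowerSeries ℤ)^(p*q) - 1) * (PowerSeries.X - 1))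
      = PowerSeries.mk (eF p q) * PowerSeries.X^(p*q+1)
        - PowerSeries.mk (eF p q) * PowerSeries.X^(p*q)
        - PowerSeries.mk (eF p q) * PowerSeries.X^1 + PowerSeries.mk (eF p q) := by
    ring
  have hR : ((PowerSeries.X : PowerSeries ℤ)^p - 1) * ((PowerSeries.X : PowerSeries ℤ)^q - 1)
      = PowerSeries.X^(p+q) - PowerSeries.X^p - PowerSeries.X^q + 1 := by
    rw [pow_add]; ring
  rw [hL, hR]
  ext n
  simp only [map_add, map_sub, PowerSeries.coeff_mul_X_pow', PowerSeries.coeff_mk,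
    PowerSeries.coeff_X_pow, PowerSeries.coeff_one]
  exact eF_identity hp.two_le hpq n


lemma coeff_pqr {p q r : ℕ} (hp : p.Prime) (hq : q.Prime) (hr : r.Prime)
    (hpq : p < q) (hqr : q < r) (n : ℕ) :
    (cyclotomic (p*q*r) ℤ).coeff n
      = ∑ x ∈ Finset.HasAntidiagonal.antidiagonal n,
          (if r ∣ x.1 then (cyclotomic (p*q) ℤ).coeff (x.1 / r) else 0) * eF p q x.2 := by
  have hrpq : ¬ r ∣ p*q := by
    rw [Nat.Prime.dvd_mul hr]
    rintro (h | h)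
    · exact absurd (Nat.le_of_dvd hp.pos h) (by omega)
    · exact absurd (Nat.le_of_dvd hq.pos h) (by omega)
  have POLY : cyclotomic (p*q*r) ℤ * (((X:ℤ[X])^(p*q) - 1) * (X - 1))
      = expand ℤ r (cyclotomic (p*q) ℤ) * (((X:ℤ[X])^p - 1) * ((X:ℤ[X])^q - 1)) := by
    rw [cyclotomic_expand_eq_cyclotomic_mul hr hrpq]
    calc cyclotomic (p*q*r) ℤ * (((X:ℤ[X])^(p*q) - 1) * (X - 1))
        = cyclotomic (p*q*r) ℤ * (cyclotomic (p*q) ℤ * (((X:ℤ[X])^p - 1) * ((X:ℤ[X])^q - 1))) := by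
          rw [cyclo_pq_mul hp hq hpq]
      _ = cyclotomic (p*q) ℤ * cyclotomic (p*q*r) ℤ * (((X:ℤ[X])^p - 1) * ((X:ℤ[X])^q - 1)) := by
          ring
      _ = _ := by rw [mul_comm (cyclotomic (p*q) ℤ)]
  -- move to power series
  have hser : (cyclotomic (p*q*r) ℤ : PowerSeries ℤ)
        * (((PowerSeries.X : PowerSeries ℤ)^(p*q) - 1) * (PowerSeries.X - 1))
      = ((expand ℤ r (cyclotomic (p*q) ℤ) : ℤ[X]) : PowerSeries ℤ)
        * (((PowerSeries.X : PowerSeries ℤ)^p - 1) * ((PowerSeries.X : PowerSeries ℤ)^q - 1)) := by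
    have := congrArg (fun f : ℤ[X] => (f : PowerSeries ℤ)) POLY
    simpa only [Polynomial.coe_mul, Polynomial.coe_sub, Polynomial.coe_pow, Polynomial.coe_X,
      Polynomial.coe_one] using this
  rw [← E_mul hp hq hpq] at hser
  have hU : IsUnit (((PowerSeries.X : PowerSeries ℤ)^(p*q) - 1) * (PowerSeries.X - 1)) := by
    rw [PowerSeries.isUnit_iff_constantCoeff]
    have h1 : (PowerSeries.constantCoeff) (((PowerSeries.X : PowerSeries ℤ)^(p*q) - 1) * (PowerSeries.X - 1)) = 1 := by
      have hpq0 : p*q ≠ 0 := Nat.mul_ne_zero hp.pos.ne' hq.pos.ne'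
      simp [map_mul, map_sub, map_pow, PowerSeries.constantCoeff_X, zero_pow hpq0]
    rw [h1]
    exact isUnit_one
  have heq : (cyclotomic (p*q*r) ℤ : PowerSeries ℤ)
      = ((expand ℤ r (cyclotomic (p*q) ℤ) : ℤ[X]) : PowerSeries ℤ) * PowerSeries.mk (eF p q) := by
    apply hU.mul_right_cancel
    rw [hser]
    ring
  have := congrArg (fun f => PowerSeries.coeff n f) heq
  rw [Polynomial.coeff_coe] at this
  rw [this, PowerSeries.coeff_mul]
  refine Finset.sum_congr rfl fun x hx => ?_
  rw [Polynomial.coeff_coe, Polynomial.coeff_expand hr.pos, PowerSeries.coeff_mk]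


lemma cast_mod_left (p t v : ℕ) : ((v % (p*t) : ℕ) : ZMod p) = (v : ZMod p) := by
  conv_rhs => rw [← Nat.div_add_mod v (p*t)]
  push_cast
  simp [ZMod.natCast_self]

lemma cast_mod_right (p t v : ℕ) : ((v % (p*t) : ℕ) : ZMod t) = (v : ZMod t) := by
  rw [mul_comm p t]
  exact cast_mod_left t p v

open Classical in
lemma card_bound {p q r ρ σ n : ℕ} (hp : p.Prime) (hq : q.Prime) (hr : r.Prime)
    (hpq : p < q) (hqr : q < r)
    (key : (ρ+1)*p + (σ+1)*q = p*q + 1) (hρ : ρ + 2 ≤ q) (hσ : σ + 2 ≤ p)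
    (oA oB : ℕ) (hor : (oA = 0 ∧ oB = q) ∨ (oA = q ∧ oB = 0)) :
    ((Finset.HasAntidiagonal.antidiagonal n).filter (fun x =>
        (∃ m, x.1 = r*m ∧ ∃ i ≤ ρ, ∃ j ≤ σ, m = i*p + j*q) ∧
        (oA ≤ x.2 % (p*q) ∧ x.2 % (p*q) < oA + p))).card
    + ((Finset.HasAntidiagonal.antidiagonal n).filter (fun x =>
        (∃ m, x.1 = r*m ∧ ∃ i ≤ q-2-ρ, ∃ j ≤ p-2-σ, m = i*p + j*q + 1) ∧
        (oB ≤ x.2 % (p*q) ∧ x.2 % (p*q) < oB + p))).card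
    ≤ p - 1 := by
  classical
  haveI : Fact p.Prime := ⟨hp⟩
  haveI : Fact q.Prime := ⟨hq⟩
  have hcopr : Nat.Coprime (p*q) r :=
    Nat.Coprime.mul ((Nat.coprime_primes hp hr).mpr (by omega))
      ((Nat.coprime_primes hq hr).mpr (by omega))
  have boundA : ∀ {m i jj : ℕ}, i ≤ ρ → jj ≤ σ → m = i*p + jj*q → m < p*q := by
    intro m i jj hi hj hm
    have h1 : i*p ≤ ρ*p := Nat.mul_le_mul_right p hi
    have h2 : jj*q ≤ σ*q := Nat.mul_le_mul_right q hj
    have e1 : (ρ+1)*p = ρ*p + p := by ring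
    have e2 : (σ+1)*q = σ*q + q := by ring
    have := hp.pos
    have := hq.pos
    omega
  have boundB : ∀ {m i jj : ℕ}, i ≤ q-2-ρ → jj ≤ p-2-σ → m = i*p + jj*q + 1 → m < p*q := by
    intro m i jj hi hj hm
    have h1 : i*p ≤ (q-2-ρ)*p := Nat.mul_le_mul_right p hi
    have h2 : jj*q ≤ (p-2-σ)*q := Nat.mul_le_mul_right q hj
    have e0 : (q-2-ρ) + (ρ + 2) = q := by omega
    have e1 : (q-2-ρ)*p + (ρ+2)*p = q*p := by rw [← Nat.add_mul, e0]
    have e0' : (p-2-σ) + (σ+2) = p := by omega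
    have e2 : (p-2-σ)*q + (σ+2)*q = p*q := by rw [← Nat.add_mul, e0']
    have e3 : (ρ+2)*p = (ρ+1)*p + p := by ring
    have e4 : (σ+2)*q = (σ+1)*q + q := by ring
    have e5 : q*p = p*q := Nat.mul_comm q p
    have := hp.pos
    have := hq.pos
    omega
  have main_inj : ∀ {x x' : ℕ×ℕ} {m m' : ℕ}, x.1 + x.2 = n → x'.1 + x'.2 = n →
      x.1 = r*m → x'.1 = r*m' → m < p*q → m' < p*q →
      x.2 % (p*q) = x'.2 % (p*q) → x = x' := by
    intro x x' m m' hx hx' h1 h1' hb hb' hmod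
    have hmodz : (x.2 : ℤ) % ((p*q : ℕ) : ℤ) = (x'.2 : ℤ) % ((p*q : ℕ) : ℤ) := by
      exact_mod_cast congrArg (fun t : ℕ => (t : ℤ)) hmod
    have hme : Int.ModEq ((p*q : ℕ) : ℤ) (x.2 : ℤ) (x'.2 : ℤ) := hmodz
    have hdvd : ((p*q : ℕ) : ℤ) ∣ (x'.2 : ℤ) - (x.2 : ℤ) := hme.dvd
    have heq2 : (x'.2 : ℤ) - (x.2 : ℤ) = (r : ℤ) * ((m : ℤ) - (m' : ℤ)) := by
      have hxz : (x.1 : ℤ) + (x.2 : ℤ) = (n : ℤ) := by exact_mod_cast hx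
      have hxz' : (x'.1 : ℤ) + (x'.2 : ℤ) = (n : ℤ) := by exact_mod_cast hx'
      have e1 : (x.1 : ℤ) = (r : ℤ) * (m : ℤ) := by exact_mod_cast congrArg (fun t:ℕ => (t:ℤ)) h1
      have e1' : (x'.1 : ℤ) = (r : ℤ) * (m' : ℤ) := by
        exact_mod_cast congrArg (fun t:ℕ => (t:ℤ)) h1'
      rw [e1] at hxz; rw [e1'] at hxz'
      linarith
    rw [heq2] at hdvd
    have hcop : IsCoprime ((p*q : ℕ) : ℤ) (r : ℤ) := by
      have := Nat.isCoprime_iff_coprime.mpr hcopr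
      exact_mod_cast this
    have hdvd2 : ((p*q : ℕ) : ℤ) ∣ ((m : ℤ) - (m' : ℤ)) := hcop.dvd_of_dvd_mul_left hdvd
    have hz : (m : ℤ) - (m' : ℤ) = 0 := by
      refine Int.eq_zero_of_abs_lt_dvd hdvd2 ?_
      rw [abs_sub_lt_iff]
      constructor
      · have : (m : ℤ) < ((p*q : ℕ) : ℤ) := by exact_mod_cast hb
        have h0 : (0 : ℤ) ≤ (m' : ℤ) := Int.natCast_nonneg _
        linarith
      · have : (m' : ℤ) < ((p*q : ℕ) : ℤ) := by exact_mod_cast hb'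
        have h0 : (0 : ℤ) ≤ (m : ℤ) := Int.natCast_nonneg _
        linarith
    have hmm : m = m' := by exact_mod_cast sub_eq_zero.mp hz
    have hx1 : x.1 = x'.1 := by rw [h1, h1', hmm]
    exact Prod.ext hx1 (by omega)
  -- ZMod key facts
  have hkeyp : ((σ : ZMod p)+1) * (q : ZMod p) = 1 := by
    have h := congrArg (fun t : ℕ => (t : ZMod p)) key
    push_cast at h
    rw [ZMod.natCast_self] at h
    simpa using h
  have hkeyq : ((ρ : ZMod q)+1) * (p : ZMod q) = 1 := by
    have h := congrArg (fun t : ℕ => (t : ZMod q)) key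
    push_cast at h
    rw [ZMod.natCast_self] at h
    simpa [mul_comm] using h
  have hOq : (oA : ZMod q) = (oB : ZMod q) := by
    rcases hor with ⟨h1, h2⟩ | ⟨h1, h2⟩ <;> subst h1 <;> subst h2 <;>
      simp [ZMod.natCast_self]
  have hOp : (oA : ZMod p) ≠ (oB : ZMod p) := by
    rcases hor with ⟨h1, h2⟩ | ⟨h1, h2⟩ <;> subst h1 <;> subst h2 <;>
      simp only [Nat.cast_zero]
    · exact (cast_q_ne_zero hp hq hpq.ne).symm
    · exact cast_q_ne_zero hp hq hpq.ne
  have hrp : (r : ZMod p) ≠ 0 := cast_q_ne_zero hp hr (by omega)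
  have hqp : (q : ZMod p) ≠ 0 := cast_q_ne_zero hp hq hpq.ne
  have hrq : (r : ZMod q) ≠ 0 := cast_q_ne_zero hq hr (by omega)
  have hpq' : (p : ZMod q) ≠ 0 := by
    rw [Ne, ZMod.natCast_eq_zero_iff]
    intro hdvd
    have := Nat.le_of_dvd hp.pos hdvd
    omega
  set FA := ((Finset.HasAntidiagonal.antidiagonal n).filter (fun x : ℕ×ℕ =>
      (∃ m, x.1 = r*m ∧ ∃ i ≤ ρ, ∃ j ≤ σ, m = i*p + j*q) ∧
      (oA ≤ x.2 % (p*q) ∧ x.2 % (p*q) < oA + p))) with hFA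
  set FB := ((Finset.HasAntidiagonal.antidiagonal n).filter (fun x : ℕ×ℕ =>
      (∃ m, x.1 = r*m ∧ ∃ i ≤ q-2-ρ, ∃ j ≤ p-2-σ, m = i*p + j*q + 1) ∧
      (oB ≤ x.2 % (p*q) ∧ x.2 % (p*q) < oB + p))) with hFB
  have hinjA : Set.InjOn (fun x : ℕ×ℕ => x.2 % (p*q) - oA) FA := by
    intro x hx x' hx' hf
    simp only at hf
    simp only [hFA, Finset.coe_filter, Set.mem_setOf_eq, Finset.HasAntidiagonal.mem_antidiagonal] at hx hx'
    obtain ⟨hx0, ⟨m, h1, i, hi, j, hj, hm⟩, hwin⟩ := hx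
    obtain ⟨hx0', ⟨m', h1', i', hi', j', hj', hm'⟩, hwin'⟩ := hx'
    exact main_inj hx0 hx0' h1 h1' (boundA hi hj hm) (boundA hi' hj' hm') (by omega)
  have hinjB : Set.InjOn (fun x : ℕ×ℕ => x.2 % (p*q) - oB) FB := by
    intro x hx x' hx' hf
    simp only at hf
    simp only [hFB, Finset.coe_filter, Set.mem_setOf_eq, Finset.HasAntidiagonal.mem_antidiagonal] at hx hx'
    obtain ⟨hx0, ⟨m, h1, i, hi, j, hj, hm⟩, hwin⟩ := hx
    obtain ⟨hx0', ⟨m', h1', i', hi', j', hj', hm'⟩, hwin'⟩ := hx'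
    exact main_inj hx0 hx0' h1 h1' (boundB hi hj hm) (boundB hi' hj' hm') (by omega)
  set GA := FA.image (fun x : ℕ×ℕ => x.2 % (p*q) - oA) with hGA
  set GB := FB.image (fun x : ℕ×ℕ => x.2 % (p*q) - oB) with hGB
  have hGAsub : GA ⊆ Finset.range p := by
    intro w hw
    obtain ⟨x, hx, rfl⟩ := Finset.mem_image.1 hw
    rw [hFA, Finset.mem_filter] at hx
    exact Finset.mem_range.2 (by omega)
  have hGBsub : GB ⊆ Finset.range p := by
    intro w hw
    obtain ⟨x, hx, rfl⟩ := Finset.mem_image.1 hw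
    rw [hFB, Finset.mem_filter] at hx
    exact Finset.mem_range.2 (by omega)
  have hdisj : Disjoint GA GB := by
    rw [Finset.disjoint_left]
    intro w hwA hwB
    obtain ⟨x, hx, hfx⟩ := Finset.mem_image.1 hwA
    obtain ⟨x', hx', hfx'⟩ := Finset.mem_image.1 hwB
    rw [hFA, Finset.mem_filter, Finset.HasAntidiagonal.mem_antidiagonal] at hx
    rw [hFB, Finset.mem_filter, Finset.HasAntidiagonal.mem_antidiagonal] at hx'
    obtain ⟨hx0, ⟨m, h1, i, hi, j, hj, hm⟩, hwin⟩ := hx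
    obtain ⟨hx0', ⟨m', h1', i', hi', j', hj', hm'⟩, hwin'⟩ := hx'
    have hxmod : x.2 % (p*q) = oA + w := by omega
    have hxmod' : x'.2 % (p*q) = oB + w := by omega
    -- work in ZMod q
    have hc2 : (x.2 : ZMod q) = (oA : ZMod q) + (w : ZMod q) := by
      rw [← cast_mod_right p q x.2, hxmod]; push_cast; ring
    have hc2' : (x'.2 : ZMod q) = (oA : ZMod q) + (w : ZMod q) := by
      rw [← cast_mod_right p q x'.2, hxmod', hOq]; push_cast; ring
    have hc1 : (x.1 : ZMod q) = (r : ZMod q) * ((i : ZMod q) * (p : ZMod q)) := by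
      rw [h1]; push_cast [hm]
      rw [ZMod.natCast_self]
      ring
    have hc1' : (x'.1 : ZMod q)
        = (r : ZMod q) * ((i' : ZMod q) * (p : ZMod q) + 1) := by
      rw [h1']; push_cast [hm']
      rw [ZMod.natCast_self]
      ring
    have hn1 : ((x.1 : ℕ) : ZMod q) + (x.2 : ZMod q) = (n : ZMod q) := by
      exact_mod_cast congrArg (fun t : ℕ => (t : ZMod q)) hx0
    have hn1' : ((x'.1 : ℕ) : ZMod q) + (x'.2 : ZMod q) = (n : ZMod q) := by
      exact_mod_cast congrArg (fun t : ℕ => (t : ZMod q)) hx0'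
    have hu : (x.1 : ZMod q) = (x'.1 : ZMod q) := by
      rw [hc2] at hn1; rw [hc2'] at hn1'
      exact add_right_cancel (hn1.trans hn1'.symm)
    have h4 : (i : ZMod q) * (p : ZMod q) = (i' : ZMod q) * (p : ZMod q) + 1 := by
      have h := hu
      rw [hc1, hc1'] at h
      have := mul_left_cancel₀ hrq h
      linear_combination this
    have h5 : (i : ZMod q) * (p : ZMod q)
        = ((i' : ZMod q) + (ρ : ZMod q) + 1) * (p : ZMod q) := by
      linear_combination h4 - hkeyq
    have h6 : (i : ZMod q) = (i' : ZMod q) + (ρ : ZMod q) + 1 := mul_right_cancel₀ hpq' h5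
    have h7 : ((i : ℕ) : ZMod q) = ((i' + ρ + 1 : ℕ) : ZMod q) := by push_cast; exact h6
    have h8 := congrArg ZMod.val h7
    rw [ZMod.val_cast_of_lt (by omega), ZMod.val_cast_of_lt (by omega)] at h8
    omega
  -- cardinality chain
  have hcard : FA.card + FB.card = (GA ∪ GB).card := by
    rw [Finset.card_union_of_disjoint hdisj, hGA, hGB,
      Finset.card_image_of_injOn hinjA, Finset.card_image_of_injOn hinjB]
  by_contra hcon
  push_neg at hcon
  have huniv : GA ∪ GB = Finset.range p := by
    refine Finset.eq_of_subset_of_card_le (Finset.union_subset hGAsub hGBsub) ?_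
    rw [Finset.card_range]
    omega
  -- coverage, apply zcover
  refine zcover hp σ hσ (oA : ZMod p) (oB : ZMod p) ((r : ZMod p) * (q : ZMod p)) hOp
    (mul_ne_zero hrp hqp) (fun y => ?_)
  set w := (((n : ZMod p) - y).val) with hwdef
  have hwp : w < p := ZMod.val_lt _
  have hwy : ((w : ℕ) : ZMod p) = (n : ZMod p) - y := by
    rw [hwdef, ZMod.natCast_val, ZMod.cast_id]
  have hyw : y = (n : ZMod p) - (w : ZMod p) := by rw [hwy]; ring
  have hmem : w ∈ GA ∪ GB := by rw [huniv]; exact Finset.mem_range.2 hwp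
  rcases Finset.mem_union.1 hmem with hw1 | hw1
  · left
    obtain ⟨x, hx, hfx⟩ := Finset.mem_image.1 hw1
    rw [hFA, Finset.mem_filter, Finset.HasAntidiagonal.mem_antidiagonal] at hx
    obtain ⟨hx0, ⟨m, h1, i, hi, j, hj, hm⟩, hwin⟩ := hx
    refine ⟨j, hj, ?_⟩
    have hxmod : x.2 % (p*q) = oA + w := by omega
    have hc2 : (x.2 : ZMod p) = (oA : ZMod p) + (w : ZMod p) := by
      rw [← cast_mod_left p q x.2, hxmod]; push_cast; ring
    have hc1 : (x.1 : ZMod p) = (r : ZMod p) * (q : ZMod p) * (j : ZMod p) := by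
      rw [h1]; push_cast [hm]
      rw [ZMod.natCast_self]
      ring
    have hn1 : ((x.1 : ℕ) : ZMod p) + (x.2 : ZMod p) = (n : ZMod p) := by
      exact_mod_cast congrArg (fun t : ℕ => (t : ZMod p)) hx0
    rw [hyw, ← hn1, hc1, hc2]
    ring
  · right
    obtain ⟨x, hx, hfx⟩ := Finset.mem_image.1 hw1
    rw [hFB, Finset.mem_filter, Finset.HasAntidiagonal.mem_antidiagonal] at hx
    obtain ⟨hx0, ⟨m, h1, i, hi, j, hj, hm⟩, hwin⟩ := hx
    refine ⟨j + σ + 1, by omega, by omega, ?_⟩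
    have hxmod : x.2 % (p*q) = oB + w := by omega
    have hc2 : (x.2 : ZMod p) = (oB : ZMod p) + (w : ZMod p) := by
      rw [← cast_mod_left p q x.2, hxmod]; push_cast; ring
    have hc1 : (x.1 : ZMod p)
        = (r : ZMod p) * (q : ZMod p) * ((j : ZMod p) + (σ : ZMod p) + 1) := by
      rw [h1]; push_cast [hm]
      rw [ZMod.natCast_self]
      linear_combination (-(r : ZMod p)) * hkeyp
    have hn1 : ((x.1 : ℕ) : ZMod p) + (x.2 : ZMod p) = (n : ZMod p) := by
      exact_mod_cast congrArg (fun t : ℕ => (t : ZMod p)) hx0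
    have : ((j + σ + 1 : ℕ) : ZMod p) = (j : ZMod p) + (σ : ZMod p) + 1 := by push_cast; ring
    rw [hyw, ← hn1, hc1, hc2, this]
    ring


end BangTernary

open BangTernary in

theorem cyclotomic_ternary_height_le (p q r : ℕ) (hp : p.Prime) (hq : q.Prime) (hr : r.Prime)
    (hp2 : Odd p) (hq2 : Odd q) (hr2 : Odd r) (hpq : p < q) (hqr : q < r) (j : ℕ) :
    |(cyclotomic (p * q * r) ℤ).coeff j| ≤ (p : ℤ) - 1 := by
  classical
  obtain ⟨ρ, σ, hρ, hσ, key⟩ := exists_rho_sigma hp hq hpq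
  rw [coeff_pqr hp hq hr hpq hqr j]
  have hwiff : ∀ v : ℕ, (0 ≤ v % (p*q) ∧ v % (p*q) < 0 + p) ↔ (v % (p*q) < p) :=
    fun v => ⟨fun h => by omega, fun h => by omega⟩
  -- pointwise bounds
  have hle : ∀ x ∈ Finset.HasAntidiagonal.antidiagonal j,
      (if r ∣ x.1 then (cyclotomic (p*q) ℤ).coeff (x.1 / r) else 0) * eF p q x.2
      ≤ (if ((∃ m, x.1 = r*m ∧ ∃ i ≤ ρ, ∃ jj ≤ σ, m = i*p + jj*q) ∧
            (0 ≤ x.2 % (p*q) ∧ x.2 % (p*q) < 0 + p)) then (1:ℤ) else 0)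
        + (if ((∃ m, x.1 = r*m ∧ ∃ i ≤ q-2-ρ, ∃ jj ≤ p-2-σ, m = i*p + jj*q + 1) ∧
            (q ≤ x.2 % (p*q) ∧ x.2 % (p*q) < q + p)) then (1:ℤ) else 0) := by
    intro x _
    by_cases hdvd : r ∣ x.1
    · obtain ⟨m, hm⟩ := hdvd
      rw [if_pos ⟨m, hm⟩]
      have hdiv : x.1 / r = m := by rw [hm]; exact Nat.mul_div_cancel_left m hr.pos
      rw [hdiv, coeff_cyclo_pq hp hq hpq key hρ hσ m]
      have hiffA : (∃ m', x.1 = r*m' ∧ ∃ i ≤ ρ, ∃ jj ≤ σ, m' = i*p + jj*q)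
          ↔ (∃ i ≤ ρ, ∃ jj ≤ σ, m = i*p + jj*q) := by
        constructor
        · rintro ⟨m', hm', h⟩
          have : m = m' := Nat.eq_of_mul_eq_mul_left hr.pos (hm ▸ hm')
          rwa [this]
        · intro h; exact ⟨m, hm, h⟩
      have hiffB : (∃ m', x.1 = r*m' ∧ ∃ i ≤ q-2-ρ, ∃ jj ≤ p-2-σ, m' = i*p + jj*q + 1)
          ↔ (∃ i ≤ q-2-ρ, ∃ jj ≤ p-2-σ, m = i*p + jj*q + 1) := by
        constructor
        · rintro ⟨m', hm', h⟩
          have : m = m' := Nat.eq_of_mul_eq_mul_left hr.pos (hm ▸ hm')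
          rwa [this]
        · intro h; exact ⟨m, hm, h⟩
      simp only [hiffA, hiffB, hwiff, eF]
      by_cases hca : (∃ i ≤ ρ, ∃ jj ≤ σ, m = i*p + jj*q) <;>
      by_cases hcb : (∃ i ≤ q-2-ρ, ∃ jj ≤ p-2-σ, m = i*p + jj*q + 1) <;>
      by_cases hw1 : (x.2 % (p*q) < p) <;>
      by_cases hw2 : (q ≤ x.2 % (p*q) ∧ x.2 % (p*q) < q + p) <;>
      simp [hca, hcb, hw1, hw2]
    · rw [if_neg hdvd, zero_mul]
      split_ifs <;> norm_num
  have hge : ∀ x ∈ Finset.HasAntidiagonal.antidiagonal j,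
      -((if r ∣ x.1 then (cyclotomic (p*q) ℤ).coeff (x.1 / r) else 0) * eF p q x.2)
      ≤ (if ((∃ m, x.1 = r*m ∧ ∃ i ≤ ρ, ∃ jj ≤ σ, m = i*p + jj*q) ∧
            (q ≤ x.2 % (p*q) ∧ x.2 % (p*q) < q + p)) then (1:ℤ) else 0)
        + (if ((∃ m, x.1 = r*m ∧ ∃ i ≤ q-2-ρ, ∃ jj ≤ p-2-σ, m = i*p + jj*q + 1) ∧
            (0 ≤ x.2 % (p*q) ∧ x.2 % (p*q) < 0 + p)) then (1:ℤ) else 0) := by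
    intro x _
    by_cases hdvd : r ∣ x.1
    · obtain ⟨m, hm⟩ := hdvd
      rw [if_pos ⟨m, hm⟩]
      have hdiv : x.1 / r = m := by rw [hm]; exact Nat.mul_div_cancel_left m hr.pos
      rw [hdiv, coeff_cyclo_pq hp hq hpq key hρ hσ m]
      have hiffA : (∃ m', x.1 = r*m' ∧ ∃ i ≤ ρ, ∃ jj ≤ σ, m' = i*p + jj*q)
          ↔ (∃ i ≤ ρ, ∃ jj ≤ σ, m = i*p + jj*q) := by
        constructor
        · rintro ⟨m', hm', h⟩
          have : m = m' := Nat.eq_of_mul_eq_mul_left hr.pos (hm ▸ hm')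
          rwa [this]
        · intro h; exact ⟨m, hm, h⟩
      have hiffB : (∃ m', x.1 = r*m' ∧ ∃ i ≤ q-2-ρ, ∃ jj ≤ p-2-σ, m' = i*p + jj*q + 1)
          ↔ (∃ i ≤ q-2-ρ, ∃ jj ≤ p-2-σ, m = i*p + jj*q + 1) := by
        constructor
        · rintro ⟨m', hm', h⟩
          have : m = m' := Nat.eq_of_mul_eq_mul_left hr.pos (hm ▸ hm')
          rwa [this]
        · intro h; exact ⟨m, hm, h⟩
      simp only [hiffA, hiffB, hwiff, eF]
      by_cases hca : (∃ i ≤ ρ, ∃ jj ≤ σ, m = i*p + jj*q) <;>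
      by_cases hcb : (∃ i ≤ q-2-ρ, ∃ jj ≤ p-2-σ, m = i*p + jj*q + 1) <;>
      by_cases hw1 : (x.2 % (p*q) < p) <;>
      by_cases hw2 : (q ≤ x.2 % (p*q) ∧ x.2 % (p*q) < q + p) <;>
      simp [hca, hcb, hw1, hw2]
    · rw [if_neg hdvd, zero_mul, neg_zero]
      split_ifs <;> norm_num
  have cb1 := card_bound (n := j) hp hq hr hpq hqr key hρ hσ 0 q (Or.inl ⟨rfl, rfl⟩)
  have cb2 := card_bound (n := j) hp hq hr hpq hqr key hρ hσ q 0 (Or.inr ⟨rfl, rfl⟩)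
  rw [abs_le]
  constructor
  · -- lower bound
    have hs := Finset.sum_le_sum hge
    rw [Finset.sum_neg_distrib] at hs
    rw [Finset.sum_add_distrib, Finset.sum_boole, Finset.sum_boole] at hs
    have hcast : ((((Finset.HasAntidiagonal.antidiagonal j).filter (fun x =>
        (∃ m, x.1 = r*m ∧ ∃ i ≤ ρ, ∃ jj ≤ σ, m = i*p + jj*q) ∧
        (q ≤ x.2 % (p*q) ∧ x.2 % (p*q) < q + p))).card : ℤ)
        + (((Finset.HasAntidiagonal.antidiagonal j).filter (fun x =>
        (∃ m, x.1 = r*m ∧ ∃ i ≤ q-2-ρ, ∃ jj ≤ p-2-σ, m = i*p + jj*q + 1) ∧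
        (0 ≤ x.2 % (p*q) ∧ x.2 % (p*q) < 0 + p))).card : ℤ)) ≤ (p:ℤ) - 1 := by
      have := cb2
      have hp1 := hp.pos
      omega
    linarith [le_trans hs hcast]
  · have hs := Finset.sum_le_sum hle
    rw [Finset.sum_add_distrib, Finset.sum_boole, Finset.sum_boole] at hs
    have hcast : ((((Finset.HasAntidiagonal.antidiagonal j).filter (fun x =>
        (∃ m, x.1 = r*m ∧ ∃ i ≤ ρ, ∃ jj ≤ σ, m = i*p + jj*q) ∧
        (0 ≤ x.2 % (p*q) ∧ x.2 % (p*q) < 0 + p))).card : ℤ)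
        + (((Finset.HasAntidiagonal.antidiagonal j).filter (fun x =>
        (∃ m, x.1 = r*m ∧ ∃ i ≤ q-2-ρ, ∃ jj ≤ p-2-σ, m = i*p + jj*q + 1) ∧
        (q ≤ x.2 % (p*q) ∧ x.2 % (p*q) < q + p))).card : ℤ)) ≤ (p:ℤ) - 1 := by
      have := cb1
      have hp1 := hp.pos
      omega
    linarith [le_trans hs hcast]
end

section
/- sup over n of the height A(n) of the n-th cyclotomic polynomial is infinite; i.e., for every M there exists a positive integer n and an index j such that the coefficient of X^j in Φ_n(X) has absolute value greater than M. -/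
open Polynomial Finset ArithmeticFunction
open scoped ArithmeticFunction ArithmeticFunction.Moebius ArithmeticFunction.Omega ArithmeticFunction.omega

lemma block_sum_le (t j : ℕ) (h : ((Finset.Ioc (2^j) (2^(j+1))).filter Nat.Prime).card ≤ t) :
    ∑ p ∈ (Finset.Ioc (2^j) (2^(j+1))).filter Nat.Prime, (1/p : ℝ) ≤ t * (1/2)^j := by
  calc ∑ p ∈ (Finset.Ioc (2^j) (2^(j+1))).filter Nat.Prime, (1/p : ℝ)
      ≤ ∑ p ∈ (Finset.Ioc (2^j) (2^(j+1))).filter Nat.Prime, ((1/2)^j : ℝ) := by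
        refine Finset.sum_le_sum fun p hp => ?_
        simp only [mem_filter, mem_Ioc] at hp
        rw [one_div, div_pow, one_pow, one_div]
        refine inv_anti₀ (by positivity) ?_
        exact_mod_cast hp.1.1.le
    _ = (((Finset.Ioc (2^j) (2^(j+1))).filter Nat.Prime).card : ℝ) * (1/2)^j := by
        rw [Finset.sum_const, nsmul_eq_mul]
    _ ≤ t * (1/2)^j := by
        apply mul_le_mul_of_nonneg_right _ (by positivity)
        exact_mod_cast h

set_option maxHeartbeats 1000000 in
lemma primes_in_dyadic_interval (t : ℕ) :
    ∃ y : ℕ, 2 ≤ y ∧ t ≤ ((Finset.Ioc y (2*y)).filter Nat.Prime).card := by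
  by_contra hcon
  push_neg at hcon
  -- every dyadic block (2^j, 2^(j+1)] with j ≥ 1 has < t primes
  have hblock : ∀ j : ℕ, 1 ≤ j → ((Finset.Ioc (2^j) (2^(j+1))).filter Nat.Prime).card < t := by
    intro j hj
    have h2 : 2 ≤ 2^j := by
      calc 2 = 2^1 := (pow_one 2).symm
      _ ≤ 2^j := Nat.pow_le_pow_right (by norm_num) hj
    have := hcon (2^j) h2
    rwa [show 2 * 2^j = 2^(j+1) by ring] at this
  obtain ⟨m, hm⟩ : ∃ m : ℕ, m = 8*t + 9 := ⟨_, rfl⟩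
  have hmlt : 8*t + 8 < 2^m := by
    calc 8*t+8 < m := by omega
    _ < 2^m := Nat.lt_two_pow_self
  obtain ⟨k, hk⟩ : ∃ k : ℕ, k = 2^m := ⟨_, rfl⟩
  obtain ⟨NN, hNN⟩ : ∃ N : ℕ, N = 4 ^ (k.primesBelow.card + 1) := ⟨_, rfl⟩
  have key := one_half_le_sum_primes_ge_one_div k
  rw [← hNN] at key
  -- the primes in the sum all lie in dyadic blocks j with m ≤ j ≤ NN
  have hsub : NN.succ.primesBelow \ k.primesBelow ⊆
      (Finset.Icc m NN).biUnion (fun j => (Finset.Ioc (2^j) (2^(j+1))).filter Nat.Prime) := by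
    intro p hp
    rw [Finset.mem_sdiff] at hp
    obtain ⟨hp1, hp2⟩ := hp
    have hpp : p.Prime := Nat.prime_of_mem_primesBelow hp1
    have hpN : p ≤ NN := Nat.lt_succ_iff.mp (Nat.lt_of_mem_primesBelow hp1)
    have hpk : k ≤ p := by
      by_contra hlt
      exact hp2 (Nat.mem_primesBelow.mpr ⟨Nat.lt_of_not_le hlt, hpp⟩)
    have hpk' : k < p := by
      rcases lt_or_eq_of_le hpk with h | h
      · exact h
      · exfalso
        rw [← h, hk] at hpp
        have := Nat.Prime.eq_one_of_pow hpp
        omega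
    have hp0 : p - 1 ≠ 0 := by
      have := hpp.two_le; omega
    set j : ℕ := Nat.log 2 (p-1) with hj
    have hj1 : 2^j ≤ p - 1 := Nat.pow_log_le_self 2 hp0
    have hj2 : p - 1 < 2^(j+1) := Nat.lt_pow_succ_log_self (by norm_num) _
    have hmj : m ≤ j := by
      rw [hj]
      rw [Nat.le_log_iff_pow_le (by norm_num) hp0]
      rw [hk] at hpk'
      omega
    have hjN : j ≤ NN := le_trans (Nat.log_le_self 2 (p-1)) (by omega)
    rw [Finset.mem_biUnion]
    refine ⟨j, Finset.mem_Icc.mpr ⟨hmj, hjN⟩, ?_⟩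
    rw [Finset.mem_filter, Finset.mem_Ioc]
    exact ⟨⟨by omega, by omega⟩, hpp⟩
  -- pairwise disjoint dyadic blocks
  have hdisj : Set.PairwiseDisjoint ↑(Finset.Icc m NN)
      (fun j => (Finset.Ioc (2^j) (2^(j+1))).filter Nat.Prime) := by
    intro a _ b _ hab
    simp only [Function.onFun]
    rw [Finset.disjoint_left]
    intro x hxa hxb
    simp only [Finset.mem_filter, Finset.mem_Ioc] at hxa hxb
    rcases Nat.lt_or_ge a b with h | h
    · have : 2^(a+1) ≤ 2^b := Nat.pow_le_pow_right (by norm_num) (by omega)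
      omega
    · have hba : b < a := by omega
      have : 2^(b+1) ≤ 2^a := Nat.pow_le_pow_right (by norm_num) (by omega)
      omega
  -- combine
  have hchain : (1/2 : ℝ) ≤ ∑ j ∈ Finset.Icc m NN,
      ∑ p ∈ (Finset.Ioc (2^j) (2^(j+1))).filter Nat.Prime, (1/p : ℝ) := by
    calc (1/2 : ℝ) ≤ ∑ p ∈ NN.succ.primesBelow \ k.primesBelow, (1/p : ℝ) := key
    _ ≤ ∑ p ∈ (Finset.Icc m NN).biUnion
          (fun j => (Finset.Ioc (2^j) (2^(j+1))).filter Nat.Prime), (1/p : ℝ) := by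
        apply Finset.sum_le_sum_of_subset_of_nonneg hsub
        intro i _ _; positivity
    _ = _ := Finset.sum_biUnion hdisj
  have hfinal : ∑ j ∈ Finset.Icc m NN,
      ∑ p ∈ (Finset.Ioc (2^j) (2^(j+1))).filter Nat.Prime, (1/p : ℝ)
      ≤ t * ((1/2)^m * 2) := by
    calc ∑ j ∈ Finset.Icc m NN, ∑ p ∈ (Finset.Ioc (2^j) (2^(j+1))).filter Nat.Prime, (1/p : ℝ)
        ≤ ∑ j ∈ Finset.Icc m NN, (t * (1/2)^j : ℝ) := by
          refine Finset.sum_le_sum fun j hj => ?_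
          have hj1 : 1 ≤ j := le_trans (by omega) (Finset.mem_Icc.mp hj).1
          exact block_sum_le t j (hblock j hj1).le
    _ = t * ∑ j ∈ Finset.Icc m NN, ((1/2)^j : ℝ) := by rw [Finset.mul_sum]
    _ ≤ t * ((1/2)^m * 2) := by
        apply mul_le_mul_of_nonneg_left _ (by positivity)
        rw [show Finset.Icc m NN = Finset.Ico m (NN+1) by rfl, Finset.sum_Ico_eq_sum_range]
        calc ∑ i ∈ Finset.range (NN + 1 - m), ((1/2:ℝ))^(m+i)
            = (1/2)^m * ∑ i ∈ Finset.range (NN + 1 - m), ((1/2:ℝ))^i := by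
              rw [Finset.mul_sum]; congr 1; ext i; rw [pow_add]
        _ ≤ (1/2)^m * 2 := by
              apply mul_le_mul_of_nonneg_left (sum_geometric_two_le _) (by positivity)
  have hbig : (t : ℝ) * ((1/2)^m * 2) < 1/2 := by
    have h2m : (8*t + 8 : ℝ) < 2^m := by exact_mod_cast hmlt
    have hpos : (0:ℝ) < 2^m := by positivity
    rw [div_pow, one_pow]
    rw [show (t:ℝ) * (1/2^m * 2) = 2*t/2^m by ring]
    rw [div_lt_div_iff₀ hpos (by norm_num)]
    nlinarith [Nat.cast_nonneg (α := ℝ) t]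
  linarith

lemma squarefree_prod_primes {S : Finset ℕ} (hS : ∀ p ∈ S, p.Prime) :
    Squarefree (∏ p ∈ S, p) := by
  induction S using Finset.induction_on with
  | empty => simpa using squarefree_one
  | insert a s ha IH =>
    rw [Finset.prod_insert ha]
    have hap : a.Prime := hS a (Finset.mem_insert_self a s)
    have hcop : Nat.Coprime a (∏ p ∈ s, p) := by
      rw [Nat.Prime.coprime_iff_not_dvd hap]
      intro hdvd
      obtain ⟨q, hq, hqd⟩ := (Prime.dvd_finset_prod_iff hap.prime _).mp hdvd
      have : a = q := ((Nat.prime_dvd_prime_iff_eq hap (hS q (Finset.mem_insert_of_mem hq))).mp hqd)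
      exact ha (this ▸ hq)
    exact (Nat.squarefree_mul hcop).mpr
      ⟨hap.squarefree, IH (fun p hp => hS p (Finset.mem_insert_of_mem hp))⟩

lemma prod_primes_ne_zero {S : Finset ℕ} (hS : ∀ p ∈ S, p.Prime) : (∏ p ∈ S, p) ≠ 0 :=
  Finset.prod_ne_zero_iff.mpr (fun p hp => (hS p hp).pos.ne')

lemma moebius_prod_primes {S : Finset ℕ} (hS : ∀ p ∈ S, p.Prime) :
    μ (∏ p ∈ S, p) = (-1) ^ S.card := by
  have hsf := squarefree_prod_primes hS
  rw [moebius_apply_of_squarefree hsf]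
  congr 1
  have h0 : (∏ p ∈ S, p) ≠ 0 := prod_primes_ne_zero hS
  have hΩ : ω (∏ p ∈ S, p) = Ω (∏ p ∈ S, p) :=
    (cardDistinctFactors_eq_cardFactors_iff_squarefree h0).mpr hsf
  have hω : ω (∏ p ∈ S, p) = S.card := by
    rw [cardDistinctFactors_apply, ← List.card_toFinset]
    change (Nat.primeFactors _).card = _
    rw [Nat.primeFactors_prod hS]
  omega

variable {K : Type*} [Field K]

lemma prod_big_factors {ι : Type*} [DecidableEq ι] (N : ℕ) (F : Finset ι) (e : ι → ℕ)
    (h : ∀ i ∈ F, N ≤ e i) :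
    ∃ R : K[X], ∏ i ∈ F, ((X : K[X])^(e i) - 1) = (-1)^F.card + X^N * R := by
  induction F using Finset.induction_on with
  | empty => exact ⟨0, by simp⟩
  | insert a F ha IH =>
    obtain ⟨R, hR⟩ := IH (fun i hi => h i (Finset.mem_insert_of_mem hi))
    have hNa : N ≤ e a := h a (Finset.mem_insert_self a F)
    refine ⟨(-1)^F.card * X^(e a - N) + X^N * X^(e a - N) * R - R, ?_⟩
    rw [Finset.prod_insert ha, hR, Finset.card_insert_of_notMem ha]
    have hX : (X : K[X])^(e a) = X^N * X^(e a - N) := by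
      rw [← pow_add]; congr 1; omega
    rw [hX]
    ring

lemma coeff_mul_small {j N : ℕ} (hj : j < N) (P R : K[X]) (c : K[X]) :
    (P * (c + X^N * R)).coeff j = (P * c).coeff j := by
  have : P * (c + X^N * R) = P * c + (P * R) * X^N := by ring
  rw [this, Polynomial.coeff_add, Polynomial.coeff_mul_X_pow', if_neg (by omega), add_zero]

lemma sum_coeff_X_sub_one_mul (A : K[X]) (m : ℕ) :
    ∑ j ∈ Finset.range (m+1), (((X : K[X]) - 1) * A).coeff j = -A.coeff m := by
  have hexp : ((X : K[X]) - 1) * A = X * A - A := by ring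
  rw [hexp]
  simp only [Polynomial.coeff_sub]
  rw [Finset.sum_sub_distrib]
  rw [Finset.sum_range_succ' (fun j => ((X : K[X]) * A).coeff j) m]
  simp only [Polynomial.coeff_X_mul]
  rw [Polynomial.mul_coeff_zero, Polynomial.coeff_X_zero, zero_mul, add_zero]
  rw [Finset.sum_range_succ (fun j => A.coeff j) m]
  ring

lemma sum_range_coeff_C_mul_X_pow (c : K) (e N : ℕ) :
    ∑ j ∈ Finset.range N, ((C c) * X^e : K[X]).coeff j = if e ∈ Finset.range N then c else 0 := by
  simp only [Polynomial.coeff_C_mul, Polynomial.coeff_X_pow]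
  rw [← Finset.sum_ite_eq' (Finset.range N) e (fun _ => c)]
  apply Finset.sum_congr rfl
  intro j _
  by_cases h : j = e <;> simp [h, eq_comm]

lemma sum_coeff_prod_X_pow_sub_one (T : Finset ℕ) (y pt : ℕ)
    (hT : ∀ p ∈ T, y < p) (hpt : pt ≤ 2*y) (hmem : ∀ p ∈ T, p ≤ pt)
    (hodd : Odd T.card) :
    ∑ j ∈ Finset.range (pt+1), (∏ p ∈ T, ((X:K[X])^p - 1)).coeff j = (T.card : K) - 1 := by
  have hrw : ∏ p ∈ T, ((X:K[X])^p - 1) =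
      ∑ S ∈ T.powerset, C ((-1:K)^((T \ S).card)) * X^(∑ p ∈ S, p) := by
    have h1 : ∀ p ∈ T, ((X:K[X])^p - 1) = X^p + (-1) := by intros; ring
    rw [Finset.prod_congr rfl h1, Finset.prod_add]
    apply Finset.sum_congr rfl
    intro S _
    rw [Finset.prod_const, Finset.prod_pow_eq_pow_sum]
    simp [mul_comm]
  rw [hrw]
  simp only [Polynomial.finset_sum_coeff]
  rw [Finset.sum_comm]
  have hterm : ∀ S ∈ T.powerset,
      ∑ j ∈ Finset.range (pt+1), (C ((-1:K)^((T \ S).card)) * X^(∑ p ∈ S, p)).coeff j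
      = if (∑ p ∈ S, p) ∈ Finset.range (pt+1) then (-1:K)^((T \ S).card) else 0 :=
    fun S _ => sum_range_coeff_C_mul_X_pow _ _ _
  rw [Finset.sum_congr rfl hterm]
  rw [Finset.sum_powerset]
  have hcard : ∀ i : ℕ, ∀ S ∈ Finset.powersetCard i T, (T \ S).card = T.card - i := by
    intro i S hS
    rw [Finset.mem_powersetCard] at hS
    rw [Finset.card_sdiff_of_subset hS.1, hS.2]
  set f : Finset ℕ → K := fun S => if (∑ p ∈ S, p) ∈ Finset.range (pt+1) then (-1:K)^((T \ S).card) else 0 with hf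
  have htpos : 1 ≤ T.card := by
    rcases hodd with ⟨w, hw⟩; omega
  have h0 : ∑ S ∈ Finset.powersetCard 0 T, f S = -1 := by
    rw [Finset.powersetCard_zero, Finset.sum_singleton, hf]
    simp [Odd.neg_one_pow hodd]
  have h1 : ∑ S ∈ Finset.powersetCard 1 T, f S = T.card := by
    rw [Finset.powersetCard_one, Finset.sum_map]
    simp only [Function.Embedding.coeFn_mk]
    have : ∀ a ∈ T, f {a} = 1 := by
      intro a ha
      rw [hf]
      simp only [Finset.sum_singleton]
      rw [if_pos (Finset.mem_range.mpr (by have := hmem a ha; omega))]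
      have hc : (T \ {a}).card = T.card - 1 := by
        rw [Finset.card_sdiff_of_subset (Finset.singleton_subset_iff.mpr ha), Finset.card_singleton]
      rw [hc]
      exact Even.neg_one_pow (Nat.Odd.sub_odd hodd odd_one)
    rw [Finset.sum_congr rfl this, Finset.sum_const, nsmul_eq_mul, mul_one]
  have h2 : ∀ i ∈ Finset.Ico 2 (T.card + 1), ∑ S ∈ Finset.powersetCard i T, f S = 0 := by
    intro i hi
    rw [Finset.mem_Ico] at hi
    apply Finset.sum_eq_zero
    intro S hS
    rw [Finset.mem_powersetCard] at hS
    have h2card : 1 < S.card := by omega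
    obtain ⟨a, ha, b, hb, hab⟩ := Finset.one_lt_card.mp h2card
    have hsum : 2*y + 2 ≤ ∑ p ∈ S, p := by
      have hsub : {a, b} ⊆ S := by
        intro x hx
        rcases Finset.mem_insert.mp hx with rfl | hx
        · exact ha
        · rw [Finset.mem_singleton] at hx; exact hx ▸ hb
      have : ∑ p ∈ ({a, b} : Finset ℕ), p ≤ ∑ p ∈ S, p :=
        Finset.sum_le_sum_of_subset hsub
      rw [Finset.sum_pair hab] at this
      have hay := hT a (hS.1 ha)
      have hby := hT b (hS.1 hb)
      omega
    rw [hf]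
    simp only []
    rw [if_neg (by rw [Finset.mem_range]; omega)]
  calc ∑ i ∈ Finset.range (T.card + 1), ∑ S ∈ Finset.powersetCard i T, f S
      = ∑ i ∈ Finset.Ico 0 2, (∑ S ∈ Finset.powersetCard i T, f S)
        + ∑ i ∈ Finset.Ico 2 (T.card + 1), (∑ S ∈ Finset.powersetCard i T, f S) := by
        rw [Finset.sum_Ico_consecutive _ (by omega : (0:ℕ) ≤ 2) (by omega : 2 ≤ T.card + 1)]
        rw [Finset.range_eq_Ico]
    _ = (-1) + (T.card : K) + 0 := by
        rw [Finset.sum_congr rfl h2, Finset.sum_const_zero]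
        congr 1
        rw [show Finset.Ico 0 2 = {0, 1} from rfl, Finset.sum_insert (by decide),
          Finset.sum_singleton, h0, h1]
    _ = (T.card : K) - 1 := by ring



lemma cyclo_coeff_eq (T : Finset ℕ) (y : ℕ)
    (hP : ∀ p ∈ T, p.Prime) (hlo : ∀ p ∈ T, y < p) (hhi : ∀ p ∈ T, p ≤ 2*y)
    (hodd : Odd T.card) (h3 : 3 ≤ T.card) :
    (cyclotomic (∏ p ∈ T, p) ℚ).coeff (T.max' (Finset.card_pos.mp (by omega))) =
      1 - T.card := by
  set n : ℕ := ∏ p ∈ T, p with hn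
  have hTne : T.Nonempty := Finset.card_pos.mp (by omega)
  set pt : ℕ := T.max' hTne with hptdef
  set N : ℕ := pt + 1 with hN
  have hn0 : n ≠ 0 := prod_primes_ne_zero hP
  have hsf : Squarefree n := squarefree_prod_primes hP
  have hpf : n.primeFactors = T := Nat.primeFactors_prod hP
  have hptT : pt ∈ T := T.max'_mem hTne
  have hptle : ∀ p ∈ T, p ≤ pt := fun p hp => T.le_max' p hp
  have hpt2y : pt ≤ 2*y := hhi pt hptT
  -- μ values
  have hμn : μ n = -1 := by
    rw [hn, moebius_prod_primes hP]
    exact Odd.neg_one_pow hodd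
  -- divisor pairs
  set s : Finset (ℕ × ℕ) := n.divisorsAntidiagonal with hs
  set sp : Finset (ℕ × ℕ) := s.filter (fun i => μ i.1 = 1) with hsp
  set sm : Finset (ℕ × ℕ) := s.filter (fun i => μ i.1 = -1) with hsm
  set d : ℕ → ℕ := fun p => ∏ q ∈ T.erase p, q with hd
  have hdp : ∀ p ∈ T, d p * p = n := by
    intro p hp
    rw [hd, hn]
    exact Finset.prod_erase_mul T _ hp
  have hμd : ∀ p ∈ T, μ (d p) = 1 := by
    intro p hp
    rw [hd, moebius_prod_primes (fun q hq => hP q (Finset.mem_of_mem_erase hq)),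
      Finset.card_erase_of_mem hp]
    exact Even.neg_one_pow (Nat.Odd.sub_odd hodd odd_one)
  -- classification of small divisors
  have hclass : ∀ e : ℕ, e ∣ n → e ≤ pt → e = 1 ∨ e ∈ T := by
    intro e hdvd hle
    by_cases he1 : e = 1
    · exact Or.inl he1
    right
    have he0 : e ≠ 0 := by rintro rfl; exact hn0 (Nat.eq_zero_of_zero_dvd hdvd)
    obtain ⟨p, hpprime, hpe⟩ := Nat.exists_prime_and_dvd he1
    have hpT : p ∈ T := by
      rw [← hpf]
      exact Nat.primeFactors_mono hdvd hn0 (Nat.mem_primeFactors.mpr ⟨hpprime, hpe, he0⟩)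
    by_cases hep : e = p
    · exact hep ▸ hpT
    exfalso
    obtain ⟨m, hm⟩ := hpe
    have hpe : p ∣ e := ⟨m, hm⟩
    have hm1 : m ≠ 1 := by rintro rfl; exact hep (by omega)
    have hm0 : m ≠ 0 := by rintro rfl; exact he0 (by omega)
    obtain ⟨q, hqprime, hqm⟩ := Nat.exists_prime_and_dvd hm1
    have hqe : q ∣ e := hm ▸ hqm.mul_left p
    have hqT : q ∈ T := by
      rw [← hpf]
      exact Nat.primeFactors_mono hdvd hn0 (Nat.mem_primeFactors.mpr ⟨hqprime, hqe, he0⟩)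
    have hpq : p ≠ q := by
      rintro rfl
      have hsq : Squarefree e := hsf.squarefree_of_dvd hdvd
      have hpp : p * p ∣ e := by rw [hm]; exact Nat.mul_dvd_mul_left p hqm
      have := Nat.isUnit_iff.mp (hsq p hpp)
      have := hpprime.one_lt
      omega
    have hpqe : p * q ∣ e :=
      Nat.Coprime.mul_dvd_of_dvd_of_dvd
        ((Nat.coprime_primes hpprime hqprime).mpr hpq) hpe hqe
    have : p * q ≤ e := Nat.le_of_dvd (by omega) hpqe
    have hyp := hlo p hpT
    have hyq := hlo q hqT
    nlinarith
  -- the Möbius identity, cleared of denominators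
  have hsquare : ∀ i ∈ s, μ i.1 = 1 ∨ μ i.1 = -1 := by
    intro i hi
    have hdvd : i.1 ∣ n := (Nat.mem_divisors.mp (Nat.fst_mem_divisors_of_mem_antidiagonal hi)).1
    have hsq : Squarefree i.1 := hsf.squarefree_of_dvd hdvd
    rw [moebius_apply_of_squarefree hsq]
    exact neg_one_pow_eq_or ℤ _
  have hsmunion : s.filter (fun i => ¬ (μ i.1 = 1)) = sm := by
    rw [hsm]
    apply Finset.filter_congr
    intro i hi
    rcases hsquare i hi with h | h <;> simp [h]
  set alg := algebraMap ℚ[X] (RatFunc ℚ) with halg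
  have halginj : Function.Injective alg := IsFractionRing.injective ℚ[X] (RatFunc ℚ)
  have hfacne : ∀ i ∈ s, ((X : ℚ[X])^(i.2) - 1) ≠ 0 := by
    intro i hi
    have h2 : i.2 ∣ n := (Nat.mem_divisors.mp (Nat.snd_mem_divisors_of_mem_antidiagonal hi)).1
    have h20 : i.2 ≠ 0 := by
      rintro h0
      exact hn0 (Nat.eq_zero_of_zero_dvd (h0 ▸ h2))
    have := monic_X_pow_sub_C (1 : ℚ) h20
    rw [Polynomial.C_1] at this
    exact this.ne_zero
  have hident : cyclotomic n ℚ * ∏ i ∈ sm, ((X : ℚ[X])^(i.2) - 1)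
      = ∏ i ∈ sp, ((X : ℚ[X])^(i.2) - 1) := by
    have hmoe := cyclotomic_eq_prod_X_pow_sub_one_pow_moebius (n := n) ℚ
    rw [← Finset.prod_filter_mul_prod_filter_not s (fun i => μ i.1 = 1)] at hmoe
    rw [hsmunion] at hmoe
    have hppart : ∏ i ∈ s.filter (fun i => μ i.1 = 1),
        (algebraMap ℚ[X] (RatFunc ℚ) ((X:ℚ[X]) ^ i.2 - 1)) ^ (μ i.1)
        = ∏ i ∈ sp, alg ((X:ℚ[X])^(i.2) - 1) := by
      rw [← hsp]
      apply Finset.prod_congr rfl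
      intro i hi
      rw [hsp] at hi
      rw [(Finset.mem_filter.mp hi).2, zpow_one]
    have hmpart : ∏ i ∈ sm,
        (algebraMap ℚ[X] (RatFunc ℚ) ((X:ℚ[X]) ^ i.2 - 1)) ^ (μ i.1)
        = (∏ i ∈ sm, alg ((X:ℚ[X])^(i.2) - 1))⁻¹ := by
      rw [← Finset.prod_inv_distrib]
      apply Finset.prod_congr rfl
      intro i hi
      rw [hsm] at hi
      rw [(Finset.mem_filter.mp hi).2, zpow_neg_one]
    rw [hppart, hmpart] at hmoe
    have hprodne : (∏ i ∈ sm, alg ((X:ℚ[X])^(i.2) - 1)) ≠ 0 := by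
      rw [Finset.prod_ne_zero_iff]
      intro i hi
      rw [hsm] at hi
      have := hfacne i (Finset.mem_filter.mp hi).1
      exact (map_ne_zero_iff alg halginj).mpr this
    apply halginj
    rw [map_mul, map_prod, map_prod]
    rw [hmoe, mul_assoc, inv_mul_cancel₀ hprodne, mul_one]
  -- structure of sm and sp
  have hmem_nm : ((n, 1) : ℕ × ℕ) ∈ sm := by
    rw [hsm, Finset.mem_filter]
    exact ⟨Nat.mem_divisorsAntidiagonal.mpr ⟨by omega, hn0⟩, hμn⟩
  set sm' : Finset (ℕ × ℕ) := sm.erase (n, 1) with hsm'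
  have hsmprod : ∏ i ∈ sm, ((X:ℚ[X])^(i.2) - 1) = (X - 1) * ∏ i ∈ sm', ((X:ℚ[X])^(i.2) - 1) := by
    rw [← Finset.mul_prod_erase sm _ hmem_nm, pow_one]
  have hbigm : ∀ i ∈ sm', N ≤ i.2 := by
    intro i hi
    have hine : i ≠ (n, 1) := Finset.ne_of_mem_erase hi
    have him : i ∈ sm := Finset.mem_of_mem_erase hi
    rw [hsm, Finset.mem_filter] at him
    obtain ⟨his, hiμ⟩ := him
    obtain ⟨hiprod, _⟩ := Nat.mem_divisorsAntidiagonal.mp his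
    by_contra hlt
    have hle : i.2 ≤ pt := by omega
    have hdvd2 : i.2 ∣ n := Dvd.intro_left i.1 hiprod
    rcases hclass i.2 hdvd2 hle with h1 | hT2
    · apply hine
      have : i.1 = n := by rw [h1] at hiprod; omega
      exact Prod.ext this h1
    · have hpp := hP i.2 hT2
      have : i.1 = d i.2 := by
        have := hdp i.2 hT2
        have h2pos : 0 < i.2 := hpp.pos
        exact Nat.eq_of_mul_eq_mul_right h2pos (by omega)
      rw [this, hμd i.2 hT2] at hiμ
      omega
  set P2 : Finset (ℕ × ℕ) := T.image (fun p => (d p, p)) with hP2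
  have hinj : Set.InjOn (fun p => (d p, p)) T := by
    intro a _ b _ hab
    exact congrArg Prod.snd hab
  have hP2sub : P2 ⊆ sp := by
    intro i hi
    rw [hP2, Finset.mem_image] at hi
    obtain ⟨p, hp, rfl⟩ := hi
    rw [hsp, Finset.mem_filter]
    exact ⟨Nat.mem_divisorsAntidiagonal.mpr ⟨hdp p hp, hn0⟩, hμd p hp⟩
  have hspprod : ∏ i ∈ sp, ((X:ℚ[X])^(i.2) - 1)
      = (∏ p ∈ T, ((X:ℚ[X])^p - 1)) * ∏ i ∈ sp \ P2, ((X:ℚ[X])^(i.2) - 1) := by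
    rw [← Finset.prod_sdiff hP2sub, mul_comm]
    congr 1
    rw [hP2, Finset.prod_image hinj]
  have hbigp : ∀ i ∈ sp \ P2, N ≤ i.2 := by
    intro i hi
    rw [Finset.mem_sdiff] at hi
    obtain ⟨hisp, hinP2⟩ := hi
    rw [hsp, Finset.mem_filter] at hisp
    obtain ⟨his, hiμ⟩ := hisp
    obtain ⟨hiprod, _⟩ := Nat.mem_divisorsAntidiagonal.mp his
    by_contra hlt
    have hle : i.2 ≤ pt := by omega
    have hdvd2 : i.2 ∣ n := Dvd.intro_left i.1 hiprod
    rcases hclass i.2 hdvd2 hle with h1 | hT2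
    · rw [h1, mul_one] at hiprod
      rw [hiprod, hμn] at hiμ
      omega
    · have hpp := hP i.2 hT2
      have hi1 : i.1 = d i.2 := by
        have := hdp i.2 hT2
        exact Nat.eq_of_mul_eq_mul_right hpp.pos (by omega)
      apply hinP2
      rw [hP2, Finset.mem_image]
      exact ⟨i.2, hT2, by rw [← hi1]⟩
  -- cardinalities
  have hcards : sp.card + sm.card = s.card := by
    rw [← hsmunion, hsp]
    exact Finset.card_filter_add_card_filter_not _
  have hscard : s.card = 2 ^ T.card := by
    have hinj2 : Set.InjOn Prod.snd (s : Set (ℕ × ℕ)) := by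
      intro i hi j hj hij
      obtain ⟨hi1, _⟩ := Nat.mem_divisorsAntidiagonal.mp hi
      obtain ⟨hj1, _⟩ := Nat.mem_divisorsAntidiagonal.mp hj
      have h20 : i.2 ≠ 0 := by rintro h0; rw [h0, mul_zero] at hi1; exact hn0 hi1.symm
      have : i.1 = j.1 := by
        have : i.1 * i.2 = j.1 * i.2 := by rw [hi1, hij] at *; rw [hij] at hj1 ⊢; omega
        exact Nat.eq_of_mul_eq_mul_right (by omega) this
      exact Prod.ext this hij
    have himg := Nat.image_snd_divisorsAntidiagonal (n := n)
    have : s.card = n.divisors.card := by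
      rw [← himg, Finset.card_image_of_injOn hinj2]
    have hfac : ∀ p ∈ T, n.factorization p + 1 = 2 := by
      intro p hp
      rw [Nat.factorization_eq_one_of_squarefree hsf (hP p hp)
        (hn ▸ Finset.dvd_prod_of_mem _ hp : p ∣ n)]
    rw [this, Nat.card_divisors hn0, hpf, Finset.prod_congr rfl hfac, Finset.prod_const]
  have hP2card : P2.card = T.card := by
    rw [hP2, Finset.card_image_of_injOn hinj]
  have hsm'card : sm'.card = sm.card - 1 := by
    rw [hsm', Finset.card_erase_of_mem hmem_nm]
  have hsmpos : 1 ≤ sm.card := Finset.card_pos.mpr ⟨_, hmem_nm⟩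
  have hsple : T.card ≤ sp.card := hP2card ▸ Finset.card_le_card hP2sub
  have heven : Even (sm'.card + (sp \ P2).card) := by
    obtain ⟨w, hw⟩ := hodd
    have hsd : (sp \ P2).card = sp.card - T.card := by
      rw [Finset.card_sdiff_of_subset hP2sub, hP2card]
    have h2pow : 2 ^ T.card = 2 * 2 ^ (T.card - 1) := by
      rw [← pow_succ']
      congr 1
      omega
    refine ⟨2 ^ (T.card - 1) - w - 1, by omega⟩
  -- truncation
  obtain ⟨Rm, hRm⟩ := prod_big_factors (K := ℚ) N sm' (fun i => i.2) hbigm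
  obtain ⟨Rp, hRp⟩ := prod_big_factors (K := ℚ) N (sp \ P2) (fun i => i.2) hbigp
  set A : ℚ[X] := (X - 1) * cyclotomic n ℚ with hA
  set B : ℚ[X] := ∏ p ∈ T, ((X:ℚ[X])^p - 1) with hB
  set k1 : ℕ := sm'.card with hk1
  set k2 : ℕ := (sp \ P2).card with hk2
  have hkey : A * ((-1)^k1 + X^N * Rm) = B * ((-1)^k2 + X^N * Rp) := by
    have h := hident
    rw [hsmprod, hRm, hspprod, hRp] at h
    linear_combination h
  have hCpow : ∀ k : ℕ, ((-1 : ℚ[X]))^k = C ((-1 : ℚ)^k) := by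
    intro k
    rw [map_pow, map_neg, map_one]
  have hcoeffeq : ∀ j, j < N → A.coeff j = B.coeff j := by
    intro j hj
    have h1 : (A * ((-1:ℚ[X])^k1 + X^N * Rm)).coeff j = (-1:ℚ)^k1 * A.coeff j := by
      rw [coeff_mul_small hj, hCpow, mul_comm, Polynomial.coeff_C_mul]
    have h2 : (B * ((-1:ℚ[X])^k2 + X^N * Rp)).coeff j = (-1:ℚ)^k2 * B.coeff j := by
      rw [coeff_mul_small hj, hCpow, mul_comm, Polynomial.coeff_C_mul]
    have h := congrArg (fun P : ℚ[X] => P.coeff j) hkey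
    rw [h1, h2] at h
    have hsq : ((-1:ℚ)^k1) * ((-1:ℚ)^k1) = 1 := by
      rw [← pow_add]
      exact Even.neg_one_pow ⟨k1, rfl⟩
    have hmul : ((-1:ℚ)^k1) * ((-1:ℚ)^k2) = 1 := by
      rw [← pow_add]
      exact Even.neg_one_pow heven
    calc A.coeff j = ((-1:ℚ)^k1) * (((-1:ℚ)^k1) * A.coeff j) := by
          rw [← mul_assoc, hsq, one_mul]
    _ = ((-1:ℚ)^k1) * (((-1:ℚ)^k2) * B.coeff j) := by rw [h]
    _ = B.coeff j := by rw [← mul_assoc, hmul, one_mul]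
  have hsums : ∑ j ∈ Finset.range (pt+1), A.coeff j = ∑ j ∈ Finset.range (pt+1), B.coeff j :=
    Finset.sum_congr rfl (fun j hj => hcoeffeq j (by rw [hN]; exact Finset.mem_range.mp hj))
  rw [hA, sum_coeff_X_sub_one_mul] at hsums
  rw [hB, sum_coeff_prod_X_pow_sub_one T y pt hlo hpt2y hptle hodd] at hsums
  have : (cyclotomic n ℚ).coeff pt = 1 - T.card := by linarith
  exact this

theorem cyclotomic_height_unbounded (M : ℤ) :
    ∃ n j : ℕ, 0 < n ∧ M < |(cyclotomic n ℤ).coeff j| := by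
  obtain ⟨t, ht⟩ : ∃ t : ℕ, t = 2 * M.toNat + 3 := ⟨_, rfl⟩
  have hodd : Odd t := ⟨M.toNat + 1, by omega⟩
  have h3 : 3 ≤ t := by omega
  obtain ⟨y, hy2, hcard⟩ := primes_in_dyadic_interval t
  obtain ⟨T, hTsub, hTcard⟩ := Finset.exists_subset_card_eq hcard
  have hP : ∀ p ∈ T, p.Prime := fun p hp => (Finset.mem_filter.mp (hTsub hp)).2
  have hlo : ∀ p ∈ T, y < p := fun p hp =>
    (Finset.mem_Ioc.mp (Finset.mem_filter.mp (hTsub hp)).1).1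
  have hhi : ∀ p ∈ T, p ≤ 2*y := fun p hp =>
    (Finset.mem_Ioc.mp (Finset.mem_filter.mp (hTsub hp)).1).2
  have hodd' : Odd T.card := hTcard ▸ hodd
  have h3' : 3 ≤ T.card := hTcard ▸ h3
  have hmain := cyclo_coeff_eq T y hP hlo hhi hodd' h3'
  set n : ℕ := ∏ p ∈ T, p with hn
  set j : ℕ := T.max' (Finset.card_pos.mp (by omega)) with hj
  refine ⟨n, j, Nat.pos_of_ne_zero (prod_primes_ne_zero hP), ?_⟩
  have hZ : (cyclotomic n ℤ).coeff j = 1 - T.card := by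
    have hmap : ((cyclotomic n ℤ).map (Int.castRingHom ℚ)).coeff j = 1 - T.card := by
      rw [map_cyclotomic]
      exact hmain
    rw [Polynomial.coeff_map] at hmap
    have h2 : ((cyclotomic n ℤ).coeff j : ℚ) = ((1 - T.card : ℤ) : ℚ) := by
      rw [show ((cyclotomic n ℤ).coeff j : ℚ)
        = (Int.castRingHom ℚ) ((cyclotomic n ℤ).coeff j) from rfl, hmap]
      push_cast
      ring
    exact_mod_cast h2
  rw [hZ]
  rw [hTcard]
  have habs : |(1 - (t:ℤ))| = (t:ℤ) - 1 := by
    rw [show (1 - (t:ℤ)) = -((t:ℤ) - 1) by ring, abs_neg, abs_of_nonneg (by omega : (0:ℤ) ≤ (t:ℤ) - 1)]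
  rw [habs]
  have : M ≤ M.toNat := Int.self_le_toNat M
  omega
end
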